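/- Let ω ∈ Ω and let C∞ be an infinite contour of φ(ω). Let G∖C∞ be the graph obtained from G by removing all edges of G crossed by edges of C∞. Then every infinite connected component of G∖C∞ contains an infinite cluster of ω that is incident to C∞. -/

import Mathlib

open scoped Classical ENNReal
open MeasureTheory

noncomputable section

namespace CP

/-! ### Site configurations and clusters on the square lattice `G = ℤ²`.
States `0` / `1` are encoded as `false` / `true`. -/

abbrev Config := ℤ × ℤ → Bool

/-- Adjacency in the square lattice `G` on `ℤ²` (ℓ¹-distance one). -/
def ZAdj (u v : ℤ × ℤ) : Prop := |u.1 - v.1| + |u.2 - v.2| = 1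

/-- The hard local constraint: around each black face (lower-left corner `(m,n)` with
`m + n` even), the corners read clockwise from the lower-left corner form one of the
words `0000, 1111, 0011, 1100, 0110, 1001`; equivalently, the two vertical sides are
each monochromatic, or the two horizontal sides are each monochromatic. -/
def Constrained (ω : Config) : Prop :=
  ∀ m n : ℤ, Even (m + n) →
    ((ω (m, n) = ω (m, n + 1) ∧ ω (m + 1, n) = ω (m + 1, n + 1)) ∨
     (ω (m, n) = ω (m + 1, n) ∧ ω (m, n + 1) = ω (m + 1, n + 1)))

/-- `u` and `v` are joined by a path of vertices all having the same state. -/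
def SameCluster (ω : Config) (u v : ℤ × ℤ) : Prop :=
  Relation.ReflTransGen (fun a b => ZAdj a b ∧ ω a = ω b) u v

/-- The cluster of the vertex `v`. -/
def cluster (ω : Config) (v : ℤ × ℤ) : Set (ℤ × ℤ) := {w | SameCluster ω v w}

def IsCluster (ω : Config) (D : Set (ℤ × ℤ)) : Prop := ∃ v, D = cluster ω v

def infiniteClusters (ω : Config) : Set (Set (ℤ × ℤ)) := {D | IsCluster ω D ∧ D.Infinite}

/-! ### Contours.
An edge of `ℒ₁ ∪ ℒ₂` is encoded by the black face it crosses (its lower-left corner)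
together with its direction (`true` = horizontal).  Endpoints are recorded in doubled
coordinates, so that the vertex `(x, y)` of the plane corresponds to `(2x, 2y)`. -/

abbrev BEdge := (ℤ × ℤ) × Bool

def IsBlackFace (f : ℤ × ℤ) : Prop := Even (f.1 + f.2)

/-- Edges of `ℒ₁` (whose vertices are the points `(m - 1/2, n + 1/2)`, `m, n` even). -/
def IsPrimalEdge (e : BEdge) : Prop :=
  (e.2 = true ∧ Even e.1.1 ∧ Even e.1.2) ∨ (e.2 = false ∧ Odd e.1.1 ∧ Odd e.1.2)

/-- Edges of `ℒ₂` (whose vertices are the points `(m - 1/2, n + 1/2)`, `m, n` odd). -/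
def IsDualEdge (e : BEdge) : Prop :=
  (e.2 = true ∧ Odd e.1.1 ∧ Odd e.1.2) ∨ (e.2 = false ∧ Even e.1.1 ∧ Even e.1.2)

/-- The two endpoints of a contour edge, in doubled coordinates. -/
def edgeEnds (e : BEdge) : (ℤ × ℤ) × (ℤ × ℤ) :=
  if e.2 then ((2 * e.1.1 - 1, 2 * e.1.2 + 1), (2 * e.1.1 + 3, 2 * e.1.2 + 1))
  else ((2 * e.1.1 + 1, 2 * e.1.2 - 1), (2 * e.1.1 + 1, 2 * e.1.2 + 3))

def shareEnd (e₁ e₂ : BEdge) : Prop :=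
  (edgeEnds e₁).1 = (edgeEnds e₂).1 ∨ (edgeEnds e₁).1 = (edgeEnds e₂).2 ∨
  (edgeEnds e₁).2 = (edgeEnds e₂).1 ∨ (edgeEnds e₁).2 = (edgeEnds e₂).2

/-- The contour configuration `φ(ω)`: a horizontal (resp. vertical) edge crossing the
black face with lower-left corner `(m, n)` is present iff the two lower corners differ
from the two upper ones (resp. the two left corners differ from the two right ones). -/
def contourCfg (ω : Config) (e : BEdge) : Bool :=
  if IsBlackFace e.1 then
    (if e.2 then ω (e.1.1, e.1.2) != ω (e.1.1, e.1.2 + 1)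
     else ω (e.1.1, e.1.2) != ω (e.1.1 + 1, e.1.2))
  else false

def SameContourB (φ : BEdge → Bool) (e e' : BEdge) : Prop :=
  Relation.ReflTransGen (fun a b => φ a = true ∧ φ b = true ∧ shareEnd a b) e e'

def contourB (φ : BEdge → Bool) (e : BEdge) : Set BEdge := {e' | SameContourB φ e e'}

/-- `C` is a contour (connected component of present edges) of the edge configuration `φ`. -/
def IsContourB (φ : BEdge → Bool) (C : Set BEdge) : Prop := ∃ e, φ e = true ∧ C = contourB φ e

def IsContour (ω : Config) (C : Set BEdge) : Prop := IsContourB (contourCfg ω) C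

def IsPrimalContour (ω : Config) (C : Set BEdge) : Prop := IsContour ω C ∧ ∀ e ∈ C, IsPrimalEdge e

def IsDualContour (ω : Config) (C : Set BEdge) : Prop := IsContour ω C ∧ ∀ e ∈ C, IsDualEdge e

/-- The vertex `v` of `G` is at Euclidean distance `1/2` from the contour edge `e`
(equivalently, `v` is a corner of the black face crossed by `e`). -/
def EdgeIncVtx (e : BEdge) (v : ℤ × ℤ) : Prop :=
  (v.1 = e.1.1 ∨ v.1 = e.1.1 + 1) ∧ (v.2 = e.1.2 ∨ v.2 = e.1.2 + 1)

/-- The contour `C` is incident to the cluster `D`. -/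
def ContourIncCluster (C : Set BEdge) (D : Set (ℤ × ℤ)) : Prop := ∃ e ∈ C, ∃ v ∈ D, EdgeIncVtx e v

/-- The edge of `G` joining `u` and `v` is crossed by the contour edge `e`
(doubled midpoints are compared). -/
def crossesG (e : BEdge) (u v : ℤ × ℤ) : Prop :=
  ZAdj u v ∧
    (if e.2 then
      (u.1 + v.1, u.2 + v.2) = (2 * e.1.1, 2 * e.1.2 + 1) ∨
      (u.1 + v.1, u.2 + v.2) = (2 * e.1.1 + 2, 2 * e.1.2 + 1)
     else
      (u.1 + v.1, u.2 + v.2) = (2 * e.1.1 + 1, 2 * e.1.2) ∨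
      (u.1 + v.1, u.2 + v.2) = (2 * e.1.1 + 1, 2 * e.1.2 + 2))

/-- The connected component of `v` in the graph obtained from `G` by deleting every
edge crossed by some contour edge belonging to `R`. -/
def GminusComp (R : Set BEdge) (v : ℤ × ℤ) : Set (ℤ × ℤ) :=
  {w | Relation.ReflTransGen (fun a b => ZAdj a b ∧ ¬∃ e ∈ R, crossesG e a b) v w}

/-! ### Ends of contours -/

/-- The connected component of the edge `e` within the edge set `S`. -/
def compIn (S : Set BEdge) (e : BEdge) : Set BEdge :=
  {e' | Relation.ReflTransGen (fun a b => a ∈ S ∧ b ∈ S ∧ shareEnd a b) e e'}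

/-- The contour `C` has at most two ends: removing any finite set of edges leaves at
most two infinite components. -/
def AtMostTwoEnds (C : Set BEdge) : Prop :=
  ∀ F : Set BEdge, F.Finite →
    ∀ e₁ e₂ e₃, e₁ ∈ C \ F → e₂ ∈ C \ F → e₃ ∈ C \ F →
      (compIn (C \ F) e₁).Infinite → (compIn (C \ F) e₂).Infinite →
      (compIn (C \ F) e₃).Infinite →
      compIn (C \ F) e₁ = compIn (C \ F) e₂ ∨ compIn (C \ F) e₁ = compIn (C \ F) e₃ ∨
        compIn (C \ F) e₂ = compIn (C \ F) e₃

/-! ### Planar embedding.  Note that `ℝ × ℝ` carries the ℓ∞ (sup) product metric. -/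

abbrev Plane := ℝ × ℝ

/-- The point of the plane with doubled coordinates `p`. -/
def ptOfDoubled (p : ℤ × ℤ) : Plane := ((p.1 : ℝ) / 2, (p.2 : ℝ) / 2)

/-- The planar position of a vertex of `G`. -/
def vtxPt (v : ℤ × ℤ) : Plane := ((v.1 : ℝ), (v.2 : ℝ))

/-- The closed planar segment realizing a contour edge. -/
def segOf (e : BEdge) : Set Plane :=
  segment ℝ (ptOfDoubled (edgeEnds e).1) (ptOfDoubled (edgeEnds e).2)

/-- The closed subset of `ℝ²` realizing a set of contour edges. -/
def contourSet (C : Set BEdge) : Set Plane := ⋃ e ∈ C, segOf e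

/-- The unbounded connected components of the complement of `S ⊆ ℝ²`. -/
def unbComps (S : Set Plane) : Set (Set Plane) :=
  {T | (∃ x ∈ Sᶜ, T = connectedComponentIn Sᶜ x) ∧ ¬Bornology.IsBounded T}

/-- The family `𝒞₂` of infinite contours whose planar complement has exactly two
unbounded components. -/
def C2set (ω : Config) : Set (Set BEdge) :=
  {C | IsContour ω C ∧ C.Infinite ∧ (unbComps (contourSet C)).ncard = 2}

/-! ### Interfaces, drawn on the dual `[Aℤ²]*` of the augmented square grid. -/

/-- `R(e)`: points at ℓ∞-distance at most `1/4` from the segment `e`. -/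
def Rnbhd (e : BEdge) : Set Plane := {x | Metric.infDist x (segOf e) ≤ 1 / 4}

/-- Edges of `[Aℤ²]*`, encoded by (index of) their lower-left endpoint and a direction
(`true` = horizontal); the vertex with index `(k, l)` is the point `(k/2 + 1/4, l/2 + 1/4)`. -/
abbrev QEdge := (ℤ × ℤ) × Bool

def qVtx (p : ℤ × ℤ) : Plane := ((p.1 : ℝ) / 2 + 1 / 4, (p.2 : ℝ) / 2 + 1 / 4)

def qEnds (q : QEdge) : (ℤ × ℤ) × (ℤ × ℤ) :=
  if q.2 then (q.1, (q.1.1 + 1, q.1.2)) else (q.1, (q.1.1, q.1.2 + 1))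

def qSeg (q : QEdge) : Set Plane := segment ℝ (qVtx (qEnds q).1) (qVtx (qEnds q).2)

/-- The interface of a contour `C`: the edges of `[Aℤ²]*` constituting the topological
boundary of `⋃ e ∈ C, R(e)`. -/
def ifaceEdges (C : Set BEdge) : Set QEdge := {q | qSeg q ⊆ frontier (⋃ e ∈ C, Rnbhd e)}

/-- The interface of the contour configuration `φ(ω)`: the union of the interfaces of
all contours. -/
def interfaceOf (ω : Config) : Set QEdge := ⋃ C ∈ {C | IsContour ω C}, ifaceEdges C

def qShare (q₁ q₂ : QEdge) : Prop :=
  (qEnds q₁).1 = (qEnds q₂).1 ∨ (qEnds q₁).1 = (qEnds q₂).2 ∨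
  (qEnds q₁).2 = (qEnds q₂).1 ∨ (qEnds q₁).2 = (qEnds q₂).2

def qCompIn (S : Set QEdge) (q : QEdge) : Set QEdge :=
  {q' | Relation.ReflTransGen (fun a b => a ∈ S ∧ b ∈ S ∧ qShare a b) q q'}

/-- `I` is a connected component of the interface of `φ(ω)`. -/
def IsInterfaceComp (ω : Config) (I : Set QEdge) : Prop :=
  ∃ q ∈ interfaceOf ω, I = qCompIn (interfaceOf ω) q

/-- The subset of `ℝ²` realizing a set of `[Aℤ²]*`-edges. -/
def qRealize (I : Set QEdge) : Set Plane := ⋃ q ∈ I, qSeg q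

/-- `F_I`: the vertices of `G` at ℓ∞-distance exactly `1/4` from `I`. -/
def interfaceNbrs (I : Set QEdge) : Set (ℤ × ℤ) :=
  {v | Metric.infDist (vtxPt v) (qRealize I) = 1 / 4}

/-- The edge set `I` is a doubly-infinite self-avoiding path in `[Aℤ²]*`. -/
def IsBiInfPathQ (I : Set QEdge) : Prop :=
  ∃ γ : ℤ → ℤ × ℤ, Function.Injective γ ∧
    (∀ i : ℤ, ∃ q ∈ I, qEnds q = (γ i, γ (i + 1)) ∨ qEnds q = (γ (i + 1), γ i)) ∧
    (∀ q ∈ I, ∃ i : ℤ, qEnds q = (γ i, γ (i + 1)) ∨ qEnds q = (γ (i + 1), γ i))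

/-- The edge set `I` is a (finite) self-avoiding cycle in `[Aℤ²]*`. -/
def IsCycleQ (I : Set QEdge) : Prop :=
  ∃ n : ℕ, 0 < n ∧ ∃ γ : ℤ → ℤ × ℤ,
    (∀ i : ℤ, γ (i + n) = γ i) ∧
    (∀ i j : ℤ, 0 ≤ i → i < j → j < n → γ i ≠ γ j) ∧
    (∀ i : ℤ, ∃ q ∈ I, qEnds q = (γ i, γ (i + 1)) ∨ qEnds q = (γ (i + 1), γ i)) ∧
    (∀ q ∈ I, ∃ i : ℤ, qEnds q = (γ i, γ (i + 1)) ∨ qEnds q = (γ (i + 1), γ i))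

/-- `F` is the vertex set of a doubly-infinite self-avoiding path in `G`. -/
def IsBiInfPathVtxSet (F : Set (ℤ × ℤ)) : Prop :=
  ∃ p : ℤ → ℤ × ℤ, Function.Injective p ∧ (∀ i : ℤ, ZAdj (p i) (p (i + 1))) ∧ Set.range p = F

/-- `F` is the vertex set of a self-avoiding cycle in `G`. -/
def IsCycleVtxSet (F : Set (ℤ × ℤ)) : Prop :=
  ∃ n : ℕ, 0 < n ∧ ∃ p : ℤ → ℤ × ℤ,
    (∀ i : ℤ, p (i + n) = p i) ∧
    (∀ i j : ℤ, 0 ≤ i → i < j → j < n → p i ≠ p j) ∧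
    (∀ i : ℤ, ZAdj (p i) (p (i + 1))) ∧ Set.range p = F

/-! ### Measures, translations and symmetries -/

/-- Translation of configurations by `t ∈ ℤ²`. -/
def shift (t : ℤ × ℤ) (ω : Config) : Config := fun v => ω (v.1 - t.1, v.2 - t.2)

/-- The involution `θ` exchanging the states `0` and `1`. -/
def flipConf (ω : Config) : Config := fun v => !(ω v)

/-- The primal contour configuration (the marginal on `E(ℒ₁)`). -/
def primalOf (ω : Config) : BEdge → Bool := fun e => if IsPrimalEdge e then contourCfg ω e else false

/-- The dual contour configuration (the marginal on `E(ℒ₂)`). -/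
def dualOf (ω : Config) : BEdge → Bool := fun e => if IsDualEdge e then contourCfg ω e else false

/-- The four boundary edges of the face `S` of `ℒ₁` indexed by the parameters
`(p, q)` (`p`, `q` odd) of the `ℒ₂`-vertex at its centre. -/
def faceEdgesL1 (p q : ℤ) : Set BEdge :=
  {((p - 1, q + 1), true), ((p - 1, q - 1), true), ((p - 2, q), false), ((p, q), false)}

/-- Switch the states of the four boundary edges of a face of `ℒ₁`. -/
def switchFace (p q : ℤ) (φ : BEdge → Bool) : BEdge → Bool :=
  fun e => if e ∈ faceEdgesL1 p q then !(φ e) else φ e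

/-- (A1): invariance under the subgroup of `ℤ²` generated by `(1,1)` and `(1,-1)`,
i.e. under every translation `t` with `t.1 + t.2` even. -/
def SatisfiesA1 (μ : Measure Config) : Prop :=
  ∀ t : ℤ × ℤ, Even (t.1 + t.2) → Measure.map (shift t) μ = μ

/-- (A2): `2ℤ × 2ℤ`-ergodicity. -/
def SatisfiesA2 (μ : Measure Config) : Prop :=
  ∀ A : Set Config, MeasurableSet A →
    (∀ t : ℤ × ℤ, shift (2 * t.1, 2 * t.2) ⁻¹' A = A) → μ A = 0 ∨ μ A = 1

/-- (A3): symmetry under exchanging `0` and `1`. -/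
def SatisfiesA3 (μ : Measure Config) : Prop := Measure.map flipConf μ = μ

/-- (Ak1): invariance under `2kℤ × 2kℤ`-translations. -/
def SatisfiesAk1 (k : ℕ) (μ : Measure Config) : Prop :=
  ∀ t : ℤ × ℤ, Measure.map (shift (2 * (k : ℤ) * t.1, 2 * (k : ℤ) * t.2)) μ = μ

/-- (Ak2): `2kℤ × 2kℤ`-ergodicity. -/
def SatisfiesAk2 (k : ℕ) (μ : Measure Config) : Prop :=
  ∀ A : Set Config, MeasurableSet A →
    (∀ t : ℤ × ℤ, shift (2 * (k : ℤ) * t.1, 2 * (k : ℤ) * t.2) ⁻¹' A = A) →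
      μ A = 0 ∨ μ A = 1

/-- (A4): finite energy of the primal contour marginal `ν₁ = primalOf_* μ`:
switching the four sides of a face of `ℒ₁` preserves positivity of probabilities. -/
def SatisfiesA4 (μ : Measure Config) : Prop :=
  ∀ p q : ℤ, Odd p → Odd q → ∀ E : Set (BEdge → Bool), MeasurableSet E →
    0 < Measure.map primalOf μ E → 0 < Measure.map primalOf μ (switchFace p q '' E)

/-! ### The induced site configuration on `V(ℒ₁)` (for assumption (A5)).
Vertices of `ℒ₁` are indexed by `(a, b) ∈ ℤ²` (the vertex `(2a - 1/2, 2b + 1/2)`);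
the base vertex `v₀` has index `(0, 0)`. -/

/-- Parity (as a `Bool`) of the number of `i` between `0` and `j` with `f i = true`. -/
def rangeParity (f : ℤ → Bool) (j : ℤ) : Bool :=
  if 0 ≤ j then decide (Odd (((Finset.Ico (0 : ℤ) j).filter fun i => f i = true).card))
  else decide (Odd (((Finset.Ico j (0 : ℤ)).filter fun i => f i = true).card))

/-- The site configuration on `V(ℒ₁)` induced by a dual contour configuration `ψ`
and the state `b₀` at the base vertex: states flip exactly across present dual edges. -/
def inducedSite (b₀ : Bool) (ψ : BEdge → Bool) : Config :=
  fun v => Bool.xor b₀ (Bool.xor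
    (rangeParity (fun i => ψ ((2 * i, 0), false)) v.1)
    (rangeParity (fun l => ψ ((2 * v.1 - 1, 2 * l + 1), true)) v.2))

/-- The law `λ₁` on `{0,1}^{V(ℒ₁)}` induced by the dual contour marginal of `μ`
together with a fair coin for the state of the base vertex. -/
def lam1 (μ : Measure Config) : Measure Config :=
  (1 / 2 : ℝ≥0∞) • Measure.map (fun ω => inducedSite true (dualOf ω)) μ +
    (1 / 2 : ℝ≥0∞) • Measure.map (fun ω => inducedSite false (dualOf ω)) μ

/-- (A5): `λ₁` is `2ℤ × 2ℤ`-ergodic (translations of the plane by `2ℤ × 2ℤ` act on the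
index set of `V(ℒ₁)` as all of `ℤ × ℤ`). -/
def SatisfiesA5 (μ : Measure Config) : Prop :=
  ∀ A : Set Config, MeasurableSet A → (∀ t : ℤ × ℤ, shift t ⁻¹' A = A) →
    lam1 μ A = 0 ∨ lam1 μ A = 1

/-! ### `ℒ₁`-edges indexed by `ℒ₁`-vertex coordinates; boxes of `ℒ₂`-faces. -/

/-- The horizontal edge of `ℒ₁` joining the `ℒ₁`-vertices indexed `(a, b)` and `(a+1, b)`. -/
def hEdge (a b : ℤ) : BEdge := ((2 * a, 2 * b), true)

/-- The vertical edge of `ℒ₁` joining the `ℒ₁`-vertices indexed `(a, b)` and `(a, b+1)`. -/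
def vEdge (a b : ℤ) : BEdge := ((2 * a - 1, 2 * b + 1), false)

/-- Membership in `Φ₁`: a bond configuration of `ℒ₁` in which every vertex of `ℒ₁`
has an even number of incident present edges. -/
def MemPhi1 (φ : BEdge → Bool) : Prop :=
  (∀ e, φ e = true → IsPrimalEdge e) ∧
    ∀ a b : ℤ,
      Even ((if φ (hEdge (a - 1) b) then 1 else 0) + (if φ (hEdge a b) then 1 else 0) +
        (if φ (vEdge a (b - 1)) then 1 else 0) + (if φ (vEdge a b) then 1 else 0) : ℕ)

/-- The edges of `ℒ₁` crossing the boundary of the `M × N` box of faces of `ℒ₂`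
whose lower-left face contains the `ℒ₁`-vertex indexed `(a₀, b₀)`. -/
def crossEdges (a₀ b₀ : ℤ) (M N : ℕ) : Finset BEdge :=
  ((Finset.Ico b₀ (b₀ + (N : ℤ))).image fun b => hEdge (a₀ - 1) b) ∪
  ((Finset.Ico b₀ (b₀ + (N : ℤ))).image fun b => hEdge (a₀ + (M : ℤ) - 1) b) ∪
  ((Finset.Ico a₀ (a₀ + (M : ℤ))).image fun a => vEdge a (b₀ - 1)) ∪
  ((Finset.Ico a₀ (a₀ + (M : ℤ))).image fun a => vEdge a (b₀ + (N : ℤ) - 1))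

/-- The `ℒ₁`-vertex indexed `(a, b)` lies strictly inside the box. -/
def insideBox (a₀ b₀ : ℤ) (M N : ℕ) (a b : ℤ) : Prop :=
  a₀ ≤ a ∧ a < a₀ + (M : ℤ) ∧ b₀ ≤ b ∧ b < b₀ + (N : ℤ)

/-- The edges of `ℒ₁` strictly enclosed by the boundary of the box (both endpoints
strictly inside): the subgraph `B_{M-1,N-1}`. -/
def interiorEdges (a₀ b₀ : ℤ) (M N : ℕ) : Set BEdge :=
  {e | (∃ a b : ℤ, e = hEdge a b ∧ insideBox a₀ b₀ M N a b ∧ insideBox a₀ b₀ M N (a + 1) b) ∨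
       (∃ a b : ℤ, e = vEdge a b ∧ insideBox a₀ b₀ M N a b ∧ insideBox a₀ b₀ M N a (b + 1))}

/-! ### Contours of an unconstrained site configuration on `V(ℒ₂)`.
Vertices of `ℒ₂` are indexed by `(c, d) ∈ ℤ²` (the vertex `(2c + 1/2, 2d + 3/2)`);
adjacency of `ℒ₂`-vertices is `ZAdj` on indices. -/

/-- The contour configuration `ψ₁(ρ)` on `ℒ₁` of a site configuration `ρ` on `V(ℒ₂)`:
an edge of `ℒ₁` is present iff the two `ℒ₂`-vertices at distance `1` from it have
different states. -/
def psi1 (ρ : Config) (e : BEdge) : Bool :=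
  if e.2 then
    if Even e.1.1 ∧ Even e.1.2 then
      ρ (e.1.1 / 2, e.1.2 / 2) != ρ (e.1.1 / 2, e.1.2 / 2 - 1)
    else false
  else
    if Odd e.1.1 ∧ Odd e.1.2 then
      ρ ((e.1.1 + 1) / 2 - 1, (e.1.2 - 1) / 2) != ρ ((e.1.1 + 1) / 2, (e.1.2 - 1) / 2)
    else false

/-- The (indices of the) two `ℒ₂`-vertices at Euclidean distance `1` from an `ℒ₁`-edge. -/
def sepVerts (e : BEdge) : Set (ℤ × ℤ) :=
  if e.2 then {(e.1.1 / 2, e.1.2 / 2), (e.1.1 / 2, e.1.2 / 2 - 1)}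
  else {((e.1.1 + 1) / 2 - 1, (e.1.2 - 1) / 2), ((e.1.1 + 1) / 2, (e.1.2 - 1) / 2)}

/-- A contour `C ⊆ E(ℒ₁)` is incident to a set `D` of `ℒ₂`-vertices (Euclidean
distance `1`). -/
def ContourIncL2Cluster (C : Set BEdge) (D : Set (ℤ × ℤ)) : Prop :=
  ∃ e ∈ C, ∃ v ∈ sepVerts e, v ∈ D

/-! ### Auxiliary development for Statement 10 -/

section Aux10

inductive Dir10 : Type | E | N | W | S
deriving DecidableEq

open Dir10 in
instance : Fintype Dir10 := ⟨⟨{E, N, W, S}, by decide⟩, by intro x; cases x <;> decide⟩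

namespace Dir10

def rot : Dir10 → Dir10  -- right turn
  | E => S | S => W | W => N | N => E

def lot : Dir10 → Dir10  -- left turn
  | E => N | N => W | W => S | S => E

def rev : Dir10 → Dir10
  | E => W | W => E | N => S | S => N

@[simp] lemma lot_rot (δ : Dir10) : δ.rot.lot = δ := by cases δ <;> rfl
@[simp] lemma rot_lot (δ : Dir10) : δ.lot.rot = δ := by cases δ <;> rfl
@[simp] lemma rot_rot_eq_rev (δ : Dir10) : δ.rot.rot = δ.rev := by cases δ <;> rfl
@[simp] lemma rev_rev (δ : Dir10) : δ.rev.rev = δ := by cases δ <;> rfl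

end Dir10

/-- A dart: an oriented contour edge, recorded by its tail ℒ-vertex
(encoded by the white face `(r,s)` whose centre `(r+1/2, s+1/2)` it is)
together with its direction of travel. -/
abbrev Dart10 := (ℤ × ℤ) × Dir10

def vecd : Dir10 → ℤ × ℤ
  | .E => (1,0) | .N => (0,1) | .W => (-1,0) | .S => (0,-1)

/-- Head vertex of a dart. -/
def dhead (d : Dart10) : ℤ × ℤ := (d.1.1 + 2 * (vecd d.2).1, d.1.2 + 2 * (vecd d.2).2)

/-- The contour edge underlying a dart. -/
def edgeOf (d : Dart10) : BEdge :=
  match d.2 with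
  | .E => ((d.1.1 + 1, d.1.2), true)
  | .W => ((d.1.1 - 1, d.1.2), true)
  | .N => ((d.1.1, d.1.2 + 1), false)
  | .S => ((d.1.1, d.1.2 - 1), false)

/-- The `G`-vertex just to the right of the tail of the dart. -/
def tc (d : Dart10) : ℤ × ℤ :=
  match d.2 with
  | .E => (d.1.1 + 1, d.1.2)
  | .N => (d.1.1 + 1, d.1.2 + 1)
  | .W => (d.1.1, d.1.2 + 1)
  | .S => d.1

/-- A dart is present when its underlying contour edge is. -/
def presb (ω : Config) (d : Dart10) : Bool := contourCfg ω (edgeOf d)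

/-- The walk successor: turn right if possible, else straight, else left. -/
def dsucc (ω : Config) (d : Dart10) : Dart10 :=
  if presb ω (dhead d, d.2.rot) then (dhead d, d.2.rot)
  else if presb ω (dhead d, d.2) then (dhead d, d.2)
  else (dhead d, d.2.lot)

def dpred (ω : Config) (d : Dart10) : Dart10 :=
  if presb ω (d.1, d.2.rot) then ((d.1.1 + 2 * (vecd d.2.rot).1, d.1.2 + 2 * (vecd d.2.rot).2), d.2.lot)
  else if presb ω (d.1, d.2.rev) then ((d.1.1 - 2 * (vecd d.2).1, d.1.2 - 2 * (vecd d.2).2), d.2)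
  else ((d.1.1 + 2 * (vecd d.2.lot).1, d.1.2 + 2 * (vecd d.2.lot).2), d.2.rot)

@[simp] lemma dsucc_fst (ω : Config) (d : Dart10) : (dsucc ω d).1 = dhead d := by
  unfold dsucc; split_ifs <;> rfl

lemma edge_rev_head (d : Dart10) : edgeOf (dhead d, d.2.rev) = edgeOf d := by
  obtain ⟨⟨r, s⟩, δ⟩ := d
  cases δ <;> simp [edgeOf, dhead, vecd, Dir10.rev] <;> ring_nf

lemma pred_succ (ω : Config) (d : Dart10) (hd : presb ω d = true) :
    dpred ω (dsucc ω d) = d := by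
  obtain ⟨⟨r, s⟩, δ⟩ := d
  have hrev : presb ω (dhead ((r,s),δ), δ.rev) = true := by
    unfold presb; rw [show ((dhead ((r,s),δ), δ.rev) : Dart10) = ((dhead ((r,s),δ)), δ.rev) from rfl, edge_rev_head]; exact hd
  unfold dsucc
  split_ifs with h1 h2
  · unfold dpred
    simp only
    rw [if_pos]
    · cases δ <;> simp_all [dhead, vecd, Dir10.rot, Dir10.lot, Dir10.rev] <;> ring_nf
    · cases δ <;> simpa [Dir10.rot, Dir10.rev] using hrev
  · unfold dpred
    simp only
    rw [if_neg, if_pos]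
    · cases δ <;> simp [dhead, vecd] <;> ring_nf
    · cases δ <;> simpa [Dir10.rot, Dir10.rev] using hrev
    · exact h1
  · unfold dpred
    simp only
    rw [if_neg, if_neg]
    · cases δ <;> simp [dhead, vecd, Dir10.rot, Dir10.lot] <;> ring_nf
    · cases δ <;> simpa [Dir10.rot, Dir10.lot, Dir10.rev] using h1
    · cases δ <;> simpa [Dir10.rot, Dir10.lot] using h2

end Aux10

section Aux10b

variable {ω : Config}

lemma zadj_iff {a b : ℤ × ℤ} :
    ZAdj a b ↔ (a.1 - b.1).natAbs + (a.2 - b.2).natAbs = 1 := by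
  unfold ZAdj; rw [Int.abs_eq_natAbs, Int.abs_eq_natAbs]; omega

lemma constr_h (hω : Constrained ω) {m n : ℤ} (h : Even (m + n)) :
    (ω (m, n) ≠ ω (m, n + 1)) ↔ (ω (m + 1, n) ≠ ω (m + 1, n + 1)) := by
  rcases hω m n h with ⟨h1, h2⟩ | ⟨h1, h2⟩
  · simp [h1, h2]
  · rw [h1, h2]

lemma constr_v (hω : Constrained ω) {m n : ℤ} (h : Even (m + n)) :
    (ω (m, n) ≠ ω (m + 1, n)) ↔ (ω (m, n + 1) ≠ ω (m + 1, n + 1)) := by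
  rcases hω m n h with ⟨h1, h2⟩ | ⟨h1, h2⟩
  · rw [h1, h2]
  · simp [h1, h2]

lemma presb_iff (hω : Constrained ω) {V : ℤ × ℤ} (hw : Odd (V.1 + V.2)) (δ : Dir10) :
    presb ω (V, δ) = true ↔ ω (tc (V, δ)) ≠ ω (tc (V, δ.lot)) := by
  obtain ⟨r, s⟩ := V
  simp only [Prod.fst, Prod.snd] at hw
  rcases hw with ⟨t, ht⟩
  cases δ
  · -- E
    have hb : IsBlackFace (r + 1, s) := ⟨t + 1, by simp only; omega⟩
    simp [presb, edgeOf, contourCfg, hb, tc, Dir10.lot, bne_iff_ne]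
  · -- N
    have hb : IsBlackFace (r, s + 1) := ⟨t + 1, by simp only; omega⟩
    simp only [presb, edgeOf, contourCfg, hb, if_true, tc, Dir10.lot, bne_iff_ne, if_pos,
      Bool.false_eq_true, if_false]
    exact ne_comm
  · -- W
    have hb : IsBlackFace (r - 1, s) := ⟨t, by simp only; omega⟩
    have he : Even ((r - 1) + s) := hb
    simp only [presb, edgeOf, contourCfg, hb, if_true, tc, Dir10.lot, bne_iff_ne, if_pos]
    have h2 := constr_h hω he
    simp only [show r - 1 + 1 = r by ring] at h2
    rw [h2]
    exact ne_comm
  · -- S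
    have hb : IsBlackFace (r, s - 1) := ⟨t, by simp only; omega⟩
    have he : Even (r + (s - 1)) := hb
    simp only [presb, edgeOf, contourCfg, hb, if_true, tc, Dir10.lot, bne_iff_ne, if_pos,
      Bool.false_eq_true, if_false]
    have h2 := constr_v hω he
    simp only [show s - 1 + 1 = s by ring] at h2
    rw [h2]

lemma white_dhead {d : Dart10} (hw : Odd (d.1.1 + d.1.2)) :
    Odd ((dhead d).1 + (dhead d).2) := by
  obtain ⟨⟨r, s⟩, δ⟩ := d
  simp only [Prod.fst, Prod.snd] at hw ⊢
  rcases hw with ⟨t, ht⟩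
  refine ⟨t + (vecd δ).1 + (vecd δ).2, ?_⟩
  cases δ <;> simp [dhead, vecd] <;> omega

lemma presb_succ (hω : Constrained ω) {d : Dart10} (hw : Odd (d.1.1 + d.1.2))
    (hp : presb ω d = true) : presb ω (dsucc ω d) = true := by
  have hw' : Odd ((dhead d).1 + (dhead d).2) := white_dhead hw
  have hrev : presb ω (dhead d, d.2.rev) = true := by
    unfold presb; rw [show edgeOf (dhead d, d.2.rev) = edgeOf d from edge_rev_head d]; exact hp
  unfold dsucc
  split_ifs with h1 h2
  · exact h1
  · exact h2
  · rw [presb_iff hω hw']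
    have l2 : d.2.rev = d.2.lot.lot := by cases d.2 <;> rfl
    have l3 : d.2.rot = d.2.lot.lot.lot := by cases d.2 <;> rfl
    have l4 : d.2.lot.lot.lot.lot = d.2 := by cases d.2 <;> rfl
    have e1 : ω (tc (dhead d, d.2.lot.lot)) ≠ ω (tc (dhead d, d.2.lot.lot.lot)) := by
      have h := (presb_iff hω hw' d.2.rev).1 hrev
      rwa [l2] at h
    have e2 : ω (tc (dhead d, d.2.lot.lot.lot)) = ω (tc (dhead d, d.2)) := by
      have h := (not_iff_not.2 (presb_iff hω hw' d.2.rot)).1 (by simp [h1])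
      rw [not_ne_iff, l3] at h
      rwa [l4] at h
    have e4 : ω (tc (dhead d, d.2)) = ω (tc (dhead d, d.2.lot)) := by
      have h := (not_iff_not.2 (presb_iff hω hw' d.2)).1 (by simp [h2])
      rwa [not_ne_iff] at h
    intro hcon
    exact e1 ((hcon.symm.trans e4.symm).trans e2.symm)

/-- single same-state step -/
lemma sc_step {u w : ℤ × ℤ} (h1 : ZAdj u w) (h2 : ω u = ω w) : SameCluster ω u w :=
  Relation.ReflTransGen.single ⟨h1, h2⟩

lemma sc_trans {u w z : ℤ × ℤ} (h1 : SameCluster ω u w) (h2 : SameCluster ω w z) :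
    SameCluster ω u z := Relation.ReflTransGen.trans h1 h2

lemma sc_symm {u w : ℤ × ℤ} (h : SameCluster ω u w) : SameCluster ω w u := by
  refine (@Relation.ReflTransGen.symmetric _ (fun a b => ZAdj a b ∧ ω a = ω b) ⟨?_⟩).symm _ _ h
  rintro a b ⟨ha, hb⟩
  refine ⟨?_, hb.symm⟩
  rw [zadj_iff] at ha ⊢; omega

lemma sc_omega {u w : ℤ × ℤ} (h : SameCluster ω u w) : ω u = ω w := by
  induction h with
  | refl => rfl
  | tail _ h ih => exact ih.trans h.2

/-- the head-side right corner equals the tail corner of the right-turn dart at the head -/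
lemma hc_eq (d : Dart10) : tc (dhead d, d.2.rot) = (tc d + vecd d.2 : ℤ × ℤ) := by
  obtain ⟨⟨r, s⟩, δ⟩ := d
  cases δ <;> simp [tc, dhead, vecd, Dir10.rot, Prod.ext_iff] <;> ring_nf

/-- along a present dart, tail corner and head corner (same side) have equal states -/
lemma tc_hc (hω : Constrained ω) {d : Dart10} (hw : Odd (d.1.1 + d.1.2))
    (hp : presb ω d = true) : ω (tc d) = ω (tc (dhead d, d.2.rot)) := by
  obtain ⟨⟨r, s⟩, δ⟩ := d
  simp only [Prod.fst, Prod.snd] at hw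
  rcases hw with ⟨t, ht⟩
  cases δ
  · -- E : face (r+1, s); bottom row mono
    have hc := hω (r+1) s ⟨t+1, by omega⟩
    have hp' : ω (r+1, s) ≠ ω (r+1, s+1) := by
      have h := (presb_iff hω (V := (r,s)) ⟨t, by simpa using ht⟩ Dir10.E).1 hp
      simpa [tc, Dir10.lot] using h
    rw [hc_eq]
    rcases hc with ⟨h1, _⟩ | ⟨h1, _⟩
    · exact absurd h1 hp'
    · simpa [tc, vecd, Prod.ext_iff] using h1
  · -- N : face (r, s+1); right column mono
    have hc := hω r (s+1) ⟨t+1, by omega⟩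
    have hp' : ω (r, s+1) ≠ ω (r+1, s+1) := by
      have h := (presb_iff hω (V := (r,s)) ⟨t, by simpa using ht⟩ Dir10.N).1 hp
      simp only [tc, Dir10.lot] at h
      exact fun hh => h hh.symm
    rw [hc_eq]
    rcases hc with ⟨_, h2⟩ | ⟨h1, _⟩
    · simpa [tc, vecd, Prod.ext_iff] using h2
    · exact absurd h1 hp'
  · -- W : face (r-1, s); top row mono
    have hc := hω (r-1) s ⟨t, by omega⟩
    have hp' : ω (r-1, s) ≠ ω (r-1, s+1) := by
      unfold presb edgeOf contourCfg at hp
      have hb : IsBlackFace (r - 1, s) := ⟨t, by simp only; omega⟩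
      simp only [hb, if_true, bne_iff_ne, if_pos] at hp
      exact hp
    rw [hc_eq]
    rcases hc with ⟨h1, _⟩ | ⟨_, h2⟩
    · exact absurd h1 hp'
    · have h3 : ω (r - 1, s + 1) = ω (r - 1 + 1, s + 1) := h2
      simp only [show r - 1 + 1 = r by ring] at h3
      simpa [tc, vecd, Prod.ext_iff, ← sub_eq_add_neg] using h3.symm
  · -- S : face (r, s-1); left column mono
    have hc := hω r (s-1) ⟨t, by omega⟩
    have hp' : ω (r, s-1) ≠ ω (r+1, s-1) := by
      unfold presb edgeOf contourCfg at hp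
      have hb : IsBlackFace (r, s - 1) := ⟨t, by simp only; omega⟩
      simp only [hb, if_true, bne_iff_ne, if_pos, Bool.false_eq_true, if_false] at hp
      exact hp
    rw [hc_eq]
    rcases hc with ⟨h1, _⟩ | ⟨h2, _⟩
    · have h3 : ω (r, s - 1) = ω (r, s - 1 + 1) := h1
      simp only [show s - 1 + 1 = s by ring] at h3
      simpa [tc, vecd, Prod.ext_iff, ← sub_eq_add_neg] using h3.symm
    · exact absurd h2 hp'

lemma zadj_tc_lot (V : ℤ × ℤ) (α : Dir10) : ZAdj (tc (V, α)) (tc (V, α.lot)) := by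
  obtain ⟨r, s⟩ := V
  rw [zadj_iff]
  cases α <;> simp [tc, Dir10.lot] <;> omega

/-- if the edge at direction `α` is absent, the two corners flanking it are in the
same cluster -/
lemma corner_link (hω : Constrained ω) {V : ℤ × ℤ} (hw : Odd (V.1 + V.2)) (α : Dir10)
    (h : presb ω (V, α) = false) : SameCluster ω (tc (V, α)) (tc (V, α.lot)) := by
  have h2 := (not_iff_not.2 (presb_iff hω hw α)).1 (by simp [h])
  rw [not_ne_iff] at h2
  exact sc_step (zadj_tc_lot V α) h2

lemma sc_tc_hc (hω : Constrained ω) {d : Dart10} (hw : Odd (d.1.1 + d.1.2))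
    (hp : presb ω d = true) : SameCluster ω (tc d) (tc (dhead d, d.2.rot)) := by
  refine sc_step ?_ (tc_hc hω hw hp)
  rw [hc_eq, zadj_iff]
  obtain ⟨⟨r, s⟩, δ⟩ := d
  cases δ <;> simp [tc, vecd] <;> omega

lemma tc_succ (hω : Constrained ω) {d : Dart10} (hw : Odd (d.1.1 + d.1.2))
    (hp : presb ω d = true) : SameCluster ω (tc d) (tc (dsucc ω d)) := by
  have hw' : Odd ((dhead d).1 + (dhead d).2) := white_dhead hw
  have hbase := sc_tc_hc hω hw hp
  unfold dsucc
  split_ifs with h1 h2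
  · exact hbase
  · refine sc_trans hbase ?_
    have h3 := corner_link hω hw' d.2.rot (by simpa using h1)
    simpa using h3
  · have h3 : SameCluster ω (tc (dhead d, d.2.rot)) (tc (dhead d, d.2)) := by
      have h4 := corner_link hω hw' d.2.rot (by simpa using h1)
      simpa using h4
    have h5 : SameCluster ω (tc (dhead d, d.2)) (tc (dhead d, d.2.lot)) :=
      corner_link hω hw' d.2 (by simpa using h2)
    exact sc_trans hbase (sc_trans h3 h5)

end Aux10b

section Aux10c

variable {ω : Config}

lemma contour_present {C : Set BEdge} (hC : IsContour ω C) {e : BEdge} (he : e ∈ C) :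
    contourCfg ω e = true := by
  obtain ⟨e₀, he₀, rfl⟩ := hC
  induction he with
  | refl => exact he₀
  | tail _ hstep _ => exact hstep.2.1

lemma cross_present_ne (hω : Constrained ω) {e : BEdge} {u w : ℤ × ℤ}
    (hp : contourCfg ω e = true) (h : crossesG e u w) : ω u ≠ ω w := by
  obtain ⟨⟨m, n⟩, t⟩ := e
  obtain ⟨hadj, hsum⟩ := h
  rw [zadj_iff] at hadj
  have hb : IsBlackFace (m, n) := by
    unfold contourCfg at hp; by_contra hbb; simp [hbb] at hp
  have heven : Even (m + n) := hb
  cases t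
  · -- vertical contour edge: crosses horizontal G-edges
    simp only [if_neg (by simp : ¬(false = true))] at hsum
    have hne1 : ω (m, n) ≠ ω (m + 1, n) := by
      unfold contourCfg at hp
      simpa [hb, bne_iff_ne] using hp
    have hne2 := (constr_v hω heven).1 hne1
    obtain ⟨u1, u2⟩ := u; obtain ⟨w1, w2⟩ := w
    simp only [Prod.mk.injEq] at hsum
    rcases hsum with ⟨h1, h2⟩ | ⟨h1, h2⟩
    · simp only [Prod.fst, Prod.snd] at *
      have : (u1 = m ∧ w1 = m + 1 ∧ u2 = n ∧ w2 = n) ∨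
             (u1 = m + 1 ∧ w1 = m ∧ u2 = n ∧ w2 = n) := by omega
      rcases this with ⟨e1, e2, e3, e4⟩ | ⟨e1, e2, e3, e4⟩ <;> subst e1 e2 e3 e4
      · exact hne1
      · exact fun hh => hne1 hh.symm
    · simp only [Prod.fst, Prod.snd] at *
      have : (u1 = m ∧ w1 = m + 1 ∧ u2 = n + 1 ∧ w2 = n + 1) ∨
             (u1 = m + 1 ∧ w1 = m ∧ u2 = n + 1 ∧ w2 = n + 1) := by omega
      rcases this with ⟨e1, e2, e3, e4⟩ | ⟨e1, e2, e3, e4⟩ <;> subst e1 e2 e3 e4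
      · exact hne2
      · exact fun hh => hne2 hh.symm
  · -- horizontal contour edge: crosses vertical G-edges
    simp only [if_pos rfl] at hsum
    have hne1 : ω (m, n) ≠ ω (m, n + 1) := by
      unfold contourCfg at hp
      simpa [hb, bne_iff_ne] using hp
    have hne2 := (constr_h hω heven).1 hne1
    obtain ⟨u1, u2⟩ := u; obtain ⟨w1, w2⟩ := w
    simp only [Prod.mk.injEq] at hsum
    rcases hsum with ⟨h1, h2⟩ | ⟨h1, h2⟩
    · simp only [Prod.fst, Prod.snd] at *
      have : (u1 = m ∧ w1 = m ∧ u2 = n ∧ w2 = n + 1) ∨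
             (u1 = m ∧ w1 = m ∧ u2 = n + 1 ∧ w2 = n) := by omega
      rcases this with ⟨e1, e2, e3, e4⟩ | ⟨e1, e2, e3, e4⟩ <;> subst e1 e2 e3 e4
      · exact hne1
      · exact fun hh => hne1 hh.symm
    · simp only [Prod.fst, Prod.snd] at *
      have : (u1 = m + 1 ∧ w1 = m + 1 ∧ u2 = n ∧ w2 = n + 1) ∨
             (u1 = m + 1 ∧ w1 = m + 1 ∧ u2 = n + 1 ∧ w2 = n) := by omega
      rcases this with ⟨e1, e2, e3, e4⟩ | ⟨e1, e2, e3, e4⟩ <;> subst e1 e2 e3 e4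
      · exact hne2
      · exact fun hh => hne2 hh.symm

/-- clusters survive in the complement of a contour -/
lemma gm_of_sc (hω : Constrained ω) {C : Set BEdge} (hC : IsContour ω C) {v u w : ℤ × ℤ}
    (hu : u ∈ GminusComp C v) (h : SameCluster ω u w) : w ∈ GminusComp C v := by
  induction h with
  | refl => exact hu
  | tail _ hstep ih =>
      refine Relation.ReflTransGen.tail ih ⟨hstep.1, ?_⟩
      rintro ⟨e, heC, hcross⟩
      exact cross_present_ne hω (contour_present hC heC) hcross hstep.2

/-- vertices incident (dist 1/2) to a crossing edge -/
lemma inc_of_cross {e : BEdge} {u w : ℤ × ℤ} (h : crossesG e u w) : EdgeIncVtx e u := by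
  obtain ⟨⟨m, n⟩, t⟩ := e
  obtain ⟨hadj, hsum⟩ := h
  rw [zadj_iff] at hadj
  obtain ⟨u1, u2⟩ := u; obtain ⟨w1, w2⟩ := w
  cases t <;> simp only [Bool.false_eq_true, if_false, if_true, Prod.mk.injEq] at hsum <;>
    [skip; skip] <;>
    · rcases hsum with ⟨h1, h2⟩ | ⟨h1, h2⟩ <;>
      · constructor <;> simp only [Prod.fst, Prod.snd] at * <;> omega

lemma zconn_right (b a : ℤ) (n : ℕ) : Relation.ReflTransGen ZAdj (a, b) (a + n, b) := by
  induction n with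
  | zero => simpa using Relation.ReflTransGen.refl
  | succ k ih =>
      refine ih.tail ?_
      rw [zadj_iff]
      simp only [Prod.fst, Prod.snd]
      omega

lemma zconn_up (a b : ℤ) (n : ℕ) : Relation.ReflTransGen ZAdj (a, b) (a, b + n) := by
  induction n with
  | zero => simpa using Relation.ReflTransGen.refl
  | succ k ih =>
      refine ih.tail ?_
      rw [zadj_iff]
      simp only [Prod.fst, Prod.snd]
      omega

lemma zconn (u w : ℤ × ℤ) : Relation.ReflTransGen ZAdj u w := by
  have hs : Symmetric (Relation.ReflTransGen ZAdj) := by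
    refine fun x y h => (@Relation.ReflTransGen.symmetric _ ZAdj ⟨?_⟩).symm x y h
    intro a b hab
    rw [zadj_iff] at *
    omega
  obtain ⟨a, b⟩ := u; obtain ⟨c, d⟩ := w
  have h1 : Relation.ReflTransGen ZAdj (a, b) (c, b) := by
    rcases le_or_gt a c with h | h
    · have := zconn_right b a (c - a).toNat
      rwa [show a + ((c - a).toNat : ℤ) = c by omega] at this
    · have := zconn_right b c (a - c).toNat
      rw [show c + ((a - c).toNat : ℤ) = a by omega] at this
      exact hs this
  have h2 : Relation.ReflTransGen ZAdj (c, b) (c, d) := by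
    rcases le_or_gt b d with h | h
    · have := zconn_up c b (d - b).toNat
      rwa [show b + ((d - b).toNat : ℤ) = d by omega] at this
    · have := zconn_up c d (b - d).toNat
      rw [show d + ((b - d).toNat : ℤ) = b by omega] at this
      exact hs this
  exact h1.trans h2

/-- Phase 1: some vertex of the component is across a G-edge crossed by the contour. -/
lemma exists_boundary_vertex {C : Set BEdge} (hC : IsContour ω C) (v : ℤ × ℤ) :
    ∃ x x' e, x ∈ GminusComp C v ∧ e ∈ C ∧ crossesG e x x' := by
  by_contra hcon
  push_neg at hcon
  have hcl : ∀ a b, a ∈ GminusComp C v → ZAdj a b → b ∈ GminusComp C v := by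
    intro a b ha hab
    refine Relation.ReflTransGen.tail ha ⟨hab, ?_⟩
    rintro ⟨e, heC, hcr⟩
    exact hcon a b e ha heC hcr
  have hall : ∀ w, w ∈ GminusComp C v := by
    intro w
    have h := zconn v w
    induction h with
    | refl => exact Relation.ReflTransGen.refl
    | tail _ hstep ih => exact hcl _ _ ih hstep
  obtain ⟨e₀, hp₀, hCeq⟩ := hC
  obtain ⟨⟨m, n⟩, t⟩ := e₀
  have hmem : ((m, n), t) ∈ C := by rw [hCeq]; exact Relation.ReflTransGen.refl
  cases t
  · -- vertical: crosses (m,n)-(m+1,n)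
    refine hcon (m, n) (m + 1, n) ((m, n), false) (hall _) hmem ⟨?_, ?_⟩
    · rw [zadj_iff]
      show (m - (m + 1)).natAbs + (n - n).natAbs = 1
      omega
    · simp only [Bool.false_eq_true, if_false, Prod.mk.injEq]
      left
      constructor
      · show m + (m + 1) = 2 * m + 1; ring
      · show n + n = 2 * n; ring
  · -- horizontal: crosses (m,n)-(m,n+1)
    refine hcon (m, n) (m, n + 1) ((m, n), true) (hall _) hmem ⟨?_, ?_⟩
    · rw [zadj_iff]
      show (m - m).natAbs + (n - (n + 1)).natAbs = 1
      omega
    · simp only [if_true, Prod.mk.injEq]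
      left
      constructor
      · show m + m = 2 * m; ring
      · show n + (n + 1) = 2 * n + 1; ring

end Aux10c

section Aux10d

variable {ω : Config}

def dbl (V : ℤ × ℤ) : ℤ × ℤ := (2 * V.1 + 1, 2 * V.2 + 1)

lemma ends_edgeOf (d : Dart10) :
    (edgeEnds (edgeOf d) = (dbl d.1, dbl (dhead d))) ∨
    (edgeEnds (edgeOf d) = (dbl (dhead d), dbl d.1)) := by
  obtain ⟨⟨r, s⟩, δ⟩ := d
  cases δ
  · left; simp [edgeOf, edgeEnds, dbl, dhead, vecd, Prod.ext_iff]; omega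
  · left; simp [edgeOf, edgeEnds, dbl, dhead, vecd, Prod.ext_iff]; omega
  · right; simp [edgeOf, edgeEnds, dbl, dhead, vecd, Prod.ext_iff]; omega
  · right; simp [edgeOf, edgeEnds, dbl, dhead, vecd, Prod.ext_iff]; omega

lemma shareEnd_of_common {e₁ e₂ : BEdge} {z : ℤ × ℤ}
    (h1 : (edgeEnds e₁).1 = z ∨ (edgeEnds e₁).2 = z)
    (h2 : (edgeEnds e₂).1 = z ∨ (edgeEnds e₂).2 = z) : shareEnd e₁ e₂ := by
  unfold shareEnd
  rcases h1 with h1 | h1 <;> rcases h2 with h2 | h2 <;> rw [h1, h2] <;> tauto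

lemma dbl_mem_ends_tail (d : Dart10) :
    (edgeEnds (edgeOf d)).1 = dbl d.1 ∨ (edgeEnds (edgeOf d)).2 = dbl d.1 := by
  rcases ends_edgeOf d with h | h <;> rw [h] <;> simp

lemma dbl_mem_ends_head (d : Dart10) :
    (edgeEnds (edgeOf d)).1 = dbl (dhead d) ∨ (edgeEnds (edgeOf d)).2 = dbl (dhead d) := by
  rcases ends_edgeOf d with h | h <;> rw [h] <;> simp

lemma shareEnd_succ (d : Dart10) : shareEnd (edgeOf d) (edgeOf (dsucc ω d)) := by
  refine shareEnd_of_common (z := dbl (dhead d)) (dbl_mem_ends_head d) ?_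
  have h := dbl_mem_ends_tail (dsucc ω d)
  rwa [dsucc_fst] at h

lemma mem_C_succ {C : Set BEdge} (hC : IsContour ω C) {d : Dart10}
    (hd : edgeOf d ∈ C) (hp : presb ω d = true) (hp' : presb ω (dsucc ω d) = true) :
    edgeOf (dsucc ω d) ∈ C := by
  obtain ⟨e₀, he₀, rfl⟩ := hC
  exact Relation.ReflTransGen.tail hd ⟨hp, hp', shareEnd_succ d⟩

lemma rev_rot_eq_lot (δ : Dir10) : δ.rev.rot = δ.lot := by cases δ <;> rfl

lemma dhead_rev (d : Dart10) : dhead (dhead d, d.2.rev) = d.1 := by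
  obtain ⟨⟨r, s⟩, δ⟩ := d
  cases δ <;> simp [dhead, vecd, Dir10.rev, Prod.ext_iff] <;> ring_nf <;> omega

lemma presb_rev {d : Dart10} (hp : presb ω d = true) :
    presb ω (dhead d, d.2.rev) = true := by
  unfold presb; rw [edge_rev_head]; exact hp

/-- the two darts of a present edge see different states -/
lemma tc_rev_ne (hω : Constrained ω) {d : Dart10} (hw : Odd (d.1.1 + d.1.2))
    (hp : presb ω d = true) : ω (tc d) ≠ ω (tc (dhead d, d.2.rev)) := by
  have hw' : Odd ((dhead d).1 + (dhead d).2) := white_dhead hw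
  have h1 := tc_hc hω (d := (dhead d, d.2.rev)) hw' (presb_rev hp)
  simp only at h1
  rw [dhead_rev, rev_rot_eq_lot] at h1
  have h2 := (presb_iff hω (V := d.1) hw d.2).1 hp
  intro hcon
  exact h2 (by rw [hcon, h1])

lemma edge_reps {d d' : Dart10} (h : edgeOf d' = edgeOf d) :
    d' = d ∨ d' = (dhead d, d.2.rev) := by
  obtain ⟨⟨r', s'⟩, δ'⟩ := d'
  obtain ⟨⟨r, s⟩, δ⟩ := d
  cases δ' <;> cases δ <;>
    simp [edgeOf, dhead, vecd, Dir10.rev, Prod.ext_iff] at h ⊢ <;> omega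

lemma tc_dir_inj {d d' : Dart10} (h1 : tc d = tc d') (h2 : d.2 = d'.2) : d = d' := by
  obtain ⟨⟨r', s'⟩, δ'⟩ := d'
  obtain ⟨⟨r, s⟩, δ⟩ := d
  simp only at h2
  subst h2
  cases δ <;> simp [tc, Prod.ext_iff] at h1 ⊢ <;> omega

/-- the unique walk dart of an edge, given the cluster side -/
lemma dart_unique (hω : Constrained ω) {d d' : Dart10}
    (hw : Odd (d.1.1 + d.1.2)) (hw' : Odd (d'.1.1 + d'.1.2))
    (hp : presb ω d = true) (he : edgeOf d' = edgeOf d)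
    (hss : ω (tc d') = ω (tc d)) : d' = d := by
  rcases edge_reps he with h | h
  · exact h
  · exfalso
    apply tc_rev_ne hω hw hp
    rw [← h, hss]

/-- initial dart: from a crossing edge, a dart on the side of `x`. -/
lemma init_dart (hω : Constrained ω) {e : BEdge} {x u' : ℤ × ℤ}
    (hp : contourCfg ω e = true) (hcr : crossesG e x u') :
    ∃ d : Dart10, edgeOf d = e ∧ Odd (d.1.1 + d.1.2) ∧ presb ω d = true ∧
      SameCluster ω x (tc d) := by
  obtain ⟨⟨m, n⟩, t⟩ := e
  have hb : IsBlackFace (m, n) := by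
    unfold contourCfg at hp; by_contra hbb; simp [hbb] at hp
  have hEv : Even (m + n) := hb
  obtain ⟨k, hk⟩ := hEv
  obtain ⟨hadj, hsum⟩ := hcr
  rw [zadj_iff] at hadj
  obtain ⟨x1, x2⟩ := x; obtain ⟨w1, w2⟩ := u'
  cases t
  · -- vertical edge
    have hne : ω (m, n) ≠ ω (m + 1, n) := by
      unfold contourCfg at hp; simpa [hb, bne_iff_ne] using hp
    have hcol : ω (m, n) = ω (m, n + 1) ∧ ω (m + 1, n) = ω (m + 1, n + 1) := by
      rcases hω m n hb with hcc | hcc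
      · exact hcc
      · exact absurd hcc.1 hne
    simp only [Bool.false_eq_true, if_false, Prod.mk.injEq] at hsum
    have hedgeL : edgeOf ((m, n + 1), Dir10.S) = ((m, n), false) := by
      simp [edgeOf, Prod.ext_iff]
    have hedgeR : edgeOf ((m, n - 1), Dir10.N) = ((m, n), false) := by
      simp [edgeOf, Prod.ext_iff]
    have hx : ((x1 = m ∧ x2 = n) ∨ (x1 = m ∧ x2 = n + 1)) ∨
        ((x1 = m + 1 ∧ x2 = n) ∨ (x1 = m + 1 ∧ x2 = n + 1)) := by
      simp only [Prod.fst, Prod.snd] at hadj hsum; omega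
    have hpres : presb ω ((m, n + 1), Dir10.S) = true := by unfold presb; rw [hedgeL]; exact hp
    have hpres' : presb ω ((m, n - 1), Dir10.N) = true := by unfold presb; rw [hedgeR]; exact hp
    rcases hx with (⟨h1, h2⟩ | ⟨h1, h2⟩) | (⟨h1, h2⟩ | ⟨h1, h2⟩)
    · refine ⟨((m, n + 1), Dir10.S), hedgeL, ⟨k, by simp only; omega⟩, hpres, ?_⟩
      rw [h1, h2]
      exact sc_step (by rw [zadj_iff]; show (m - m).natAbs + (n - (n + 1)).natAbs = 1; omega) hcol.1
    · refine ⟨((m, n + 1), Dir10.S), hedgeL, ⟨k, by simp only; omega⟩, hpres, ?_⟩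
      rw [h1, h2]
      exact Relation.ReflTransGen.refl
    · refine ⟨((m, n - 1), Dir10.N), hedgeR, ⟨k - 1, by simp only; omega⟩, hpres', ?_⟩
      rw [h1, h2, show tc ((m, n - 1), Dir10.N) = (m + 1, n) from by simp [tc, Prod.ext_iff]]
      exact Relation.ReflTransGen.refl
    · refine ⟨((m, n - 1), Dir10.N), hedgeR, ⟨k - 1, by simp only; omega⟩, hpres', ?_⟩
      rw [h1, h2, show tc ((m, n - 1), Dir10.N) = (m + 1, n) from by simp [tc, Prod.ext_iff]]
      exact sc_step (by rw [zadj_iff]; show (m + 1 - (m + 1)).natAbs + (n + 1 - n).natAbs = 1; omega)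
        hcol.2.symm
  · -- horizontal edge
    have hne : ω (m, n) ≠ ω (m, n + 1) := by
      unfold contourCfg at hp; simpa [hb, bne_iff_ne] using hp
    have hrow : ω (m, n) = ω (m + 1, n) ∧ ω (m, n + 1) = ω (m + 1, n + 1) := by
      rcases hω m n hb with hcc | hcc
      · exact absurd hcc.1 hne
      · exact hcc
    simp only [if_true, Prod.mk.injEq] at hsum
    have hedgeB : edgeOf ((m - 1, n), Dir10.E) = ((m, n), true) := by
      simp [edgeOf, Prod.ext_iff]
    have hedgeT : edgeOf ((m + 1, n), Dir10.W) = ((m, n), true) := by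
      simp [edgeOf, Prod.ext_iff]
    have hx : ((x1 = m ∧ x2 = n) ∨ (x1 = m ∧ x2 = n + 1)) ∨
        ((x1 = m + 1 ∧ x2 = n) ∨ (x1 = m + 1 ∧ x2 = n + 1)) := by
      simp only [Prod.fst, Prod.snd] at hadj hsum; omega
    have hpres : presb ω ((m - 1, n), Dir10.E) = true := by unfold presb; rw [hedgeB]; exact hp
    have hpres' : presb ω ((m + 1, n), Dir10.W) = true := by unfold presb; rw [hedgeT]; exact hp
    rcases hx with (⟨h1, h2⟩ | ⟨h1, h2⟩) | (⟨h1, h2⟩ | ⟨h1, h2⟩)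
    · refine ⟨((m - 1, n), Dir10.E), hedgeB, ⟨k - 1, by simp only; omega⟩, hpres, ?_⟩
      rw [h1, h2]
      show SameCluster ω (m, n) (m - 1 + 1, n)
      rw [show m - 1 + 1 = m by ring]
      exact Relation.ReflTransGen.refl
    · refine ⟨((m + 1, n), Dir10.W), hedgeT, ⟨k, by simp only; omega⟩, hpres', ?_⟩
      rw [h1, h2]
      show SameCluster ω (m, n + 1) (m + 1, n + 1)
      exact sc_step (by rw [zadj_iff]; show (m - (m + 1)).natAbs + (n + 1 - (n + 1)).natAbs = 1; omega)
        hrow.2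
    · refine ⟨((m - 1, n), Dir10.E), hedgeB, ⟨k - 1, by simp only; omega⟩, hpres, ?_⟩
      rw [h1, h2]
      show SameCluster ω (m + 1, n) (m - 1 + 1, n)
      rw [show m - 1 + 1 = m by ring]
      exact sc_step (by rw [zadj_iff]; show (m + 1 - m).natAbs + (n - n).natAbs = 1; omega)
        hrow.1.symm
    · refine ⟨((m + 1, n), Dir10.W), hedgeT, ⟨k, by simp only; omega⟩, hpres', ?_⟩
      rw [h1, h2]
      show SameCluster ω (m + 1, n + 1) (m + 1, n + 1)
      exact Relation.ReflTransGen.refl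

end Aux10d

section Aux10e

/-- signed crossing of the downward ray from `u` -/
def cray (u : ℤ × ℤ) (d : Dart10) : ℤ :=
  match d.2 with
  | .E => if d.1.2 < u.2 ∧ (u.1 = d.1.1 + 1 ∨ u.1 = d.1.1 + 2) then 1 else 0
  | .W => if d.1.2 < u.2 ∧ (u.1 = d.1.1 - 1 ∨ u.1 = d.1.1) then -1 else 0
  | _ => 0

/-- signed crossing of the vertical `G`-edge `(p,q)-(p,q+1)` -/
def chiv (p q : ℤ) (d : Dart10) : ℤ :=
  match d.2 with
  | .E => if d.1.2 = q ∧ (p = d.1.1 + 1 ∨ p = d.1.1 + 2) then 1 else 0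
  | .W => if d.1.2 = q ∧ (p = d.1.1 - 1 ∨ p = d.1.1) then -1 else 0
  | _ => 0

/-- signed crossing of the horizontal `G`-edge `(p,q)-(p+1,q)` -/
def chih (p q : ℤ) (d : Dart10) : ℤ :=
  match d.2 with
  | .N => if d.1.1 = p ∧ (q = d.1.2 + 1 ∨ q = d.1.2 + 2) then 1 else 0
  | .S => if d.1.1 = p ∧ (q = d.1.2 - 1 ∨ q = d.1.2) then -1 else 0
  | _ => 0

def gT (p q : ℤ) (z : ℤ × ℤ) : ℤ := if z.1 = p ∧ z.2 < q then 1 else 0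

def sigc (p : ℤ) (z : ℤ × ℤ) : ℤ := if p ≤ z.1 then 1 else 0

lemma cray_vert (p q : ℤ) (d : Dart10) :
    cray (p, q + 1) d - cray (p, q) d = chiv p q d := by
  obtain ⟨⟨r, s⟩, δ⟩ := d
  cases δ <;> simp only [cray, chiv] <;>
    first
    | (split_ifs <;> omega)
    | omega

lemma cray_horiz (p q : ℤ) (d : Dart10) :
    cray (p, q) d - cray (p + 1, q) d - chih p q d = gT p q (dhead d) - gT p q d.1 := by
  obtain ⟨⟨r, s⟩, δ⟩ := d
  cases δ <;> simp only [cray, chih, gT, dhead, vecd] <;> split_ifs <;> omega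

lemma cray_top (p q : ℤ) (d : Dart10) (h : d.1.2 < q) :
    cray (p, q) d = sigc p (dhead d) - sigc p d.1 := by
  obtain ⟨⟨r, s⟩, δ⟩ := d
  simp only at h
  cases δ <;> simp only [cray, sigc, dhead, vecd] <;> split_ifs <;> omega

lemma chiv_cross {p q : ℤ} {d : Dart10} (h : chiv p q d ≠ 0) :
    crossesG (edgeOf d) (p, q) (p, q + 1) := by
  obtain ⟨⟨r, s⟩, δ⟩ := d
  refine ⟨by rw [zadj_iff]; show (p - p).natAbs + (q - (q + 1)).natAbs = 1; omega, ?_⟩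
  cases δ
  · simp only [chiv] at h
    split_ifs at h with hc
    · obtain ⟨h1, h2⟩ := hc
      show (p + p, q + (q + 1)) = (2 * (r + 1), 2 * s + 1) ∨
           (p + p, q + (q + 1)) = (2 * (r + 1) + 2, 2 * s + 1)
      simp only [Prod.mk.injEq]
      omega
    · exact absurd rfl h
  · exact absurd rfl h
  · simp only [chiv] at h
    split_ifs at h with hc
    · obtain ⟨h1, h2⟩ := hc
      show (p + p, q + (q + 1)) = (2 * (r - 1), 2 * s + 1) ∨
           (p + p, q + (q + 1)) = (2 * (r - 1) + 2, 2 * s + 1)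
      simp only [Prod.mk.injEq]
      omega
    · exact absurd rfl h
  · exact absurd rfl h

lemma chih_cross {p q : ℤ} {d : Dart10} (h : chih p q d ≠ 0) :
    crossesG (edgeOf d) (p, q) (p + 1, q) := by
  obtain ⟨⟨r, s⟩, δ⟩ := d
  refine ⟨by rw [zadj_iff]; show (p - (p + 1)).natAbs + (q - q).natAbs = 1; omega, ?_⟩
  cases δ
  · exact absurd rfl h
  · simp only [chih] at h
    split_ifs at h with hc
    · obtain ⟨h1, h2⟩ := hc
      show (p + (p + 1), q + q) = (2 * r + 1, 2 * (s + 1)) ∨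
           (p + (p + 1), q + q) = (2 * r + 1, 2 * (s + 1) + 2)
      simp only [Prod.mk.injEq]
      omega
    · exact absurd rfl h
  · exact absurd rfl h
  · simp only [chih] at h
    split_ifs at h with hc
    · obtain ⟨h1, h2⟩ := hc
      show (p + (p + 1), q + q) = (2 * r + 1, 2 * (s - 1)) ∨
           (p + (p + 1), q + q) = (2 * r + 1, 2 * (s - 1) + 2)
      simp only [Prod.mk.injEq]
      omega
    · exact absurd rfl h

variable {ω : Config} (dd : ℕ → Dart10) (k : ℕ)

/-- the winding potential of the closed walk -/
def WW (u : ℤ × ℤ) : ℤ := ∑ i ∈ Finset.range k, cray u (dd i)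

lemma WW_vert_diff (p q : ℤ) :
    WW dd k (p, q + 1) - WW dd k (p, q) = ∑ i ∈ Finset.range k, chiv p q (dd i) := by
  unfold WW
  rw [← Finset.sum_sub_distrib]
  exact Finset.sum_congr rfl fun i _ => cray_vert p q (dd i)

lemma WW_horiz_diff (p q : ℤ) (hclose : dd k = dd 0)
    (hstep : ∀ i, dd (i + 1) = dsucc ω (dd i)) :
    WW dd k (p, q) - WW dd k (p + 1, q) = ∑ i ∈ Finset.range k, chih p q (dd i) := by
  have htel : ∑ i ∈ Finset.range k, (gT p q ((dd (i + 1)).1) - gT p q ((dd i).1)) = 0 := by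
    rw [Finset.sum_range_sub (f := fun i => gT p q ((dd i).1))]
    rw [hclose]; ring
  have hh : ∀ i, gT p q (dhead (dd i)) = gT p q ((dd (i + 1)).1) := by
    intro i; rw [hstep i, dsucc_fst]
  calc WW dd k (p, q) - WW dd k (p + 1, q)
      = ∑ i ∈ Finset.range k, (cray (p, q) (dd i) - cray (p + 1, q) (dd i)) := by
        unfold WW; rw [← Finset.sum_sub_distrib]
    _ = ∑ i ∈ Finset.range k, (chih p q (dd i) +
          (gT p q ((dd (i + 1)).1) - gT p q ((dd i).1))) := by
        refine Finset.sum_congr rfl fun i _ => ?_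
        have := cray_horiz p q (dd i)
        rw [hh i] at this
        omega
    _ = ∑ i ∈ Finset.range k, chih p q (dd i) := by
        rw [Finset.sum_add_distrib, htel, add_zero]

lemma WW_far_low {u : ℤ × ℤ} (h : ∀ i < k, u.2 ≤ (dd i).1.2) : WW dd k u = 0 := by
  unfold WW
  refine Finset.sum_eq_zero fun i hi => ?_
  have hle := h i (Finset.mem_range.1 hi)
  obtain ⟨p, q⟩ := u
  generalize hgen : dd i = d at hle ⊢
  obtain ⟨⟨r, s⟩, δ⟩ := d
  simp only at hle
  cases δ <;> simp only [cray] <;>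
    first
    | (split_ifs with hc <;> first | rfl | (exfalso; omega))
    | rfl

lemma WW_far_side {u : ℤ × ℤ} (h : ∀ i < k, (u.1 - (dd i).1.1).natAbs > 2) :
    WW dd k u = 0 := by
  unfold WW
  refine Finset.sum_eq_zero fun i hi => ?_
  have hle := h i (Finset.mem_range.1 hi)
  obtain ⟨p, q⟩ := u
  generalize hgen : dd i = d at hle ⊢
  obtain ⟨⟨r, s⟩, δ⟩ := d
  simp only at hle
  cases δ <;> simp only [cray] <;>
    first
    | (split_ifs with hc <;> first | rfl | (exfalso; omega))
    | rfl

lemma WW_far_top {u : ℤ × ℤ} (hclose : dd k = dd 0)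
    (hstep : ∀ i, dd (i + 1) = dsucc ω (dd i))
    (h : ∀ i < k, (dd i).1.2 < u.2) : WW dd k u = 0 := by
  obtain ⟨p, q⟩ := u
  unfold WW
  have hh : ∀ i ∈ Finset.range k, cray (p, q) (dd i) =
      sigc p ((dd (i + 1)).1) - sigc p ((dd i).1) := by
    intro i hi
    rw [hstep i, dsucc_fst]
    exact cray_top p q (dd i) (h i (Finset.mem_range.1 hi))
  rw [Finset.sum_congr rfl hh, Finset.sum_range_sub (f := fun i => sigc p ((dd i).1)), hclose]
  ring

end Aux10e

section Aux10f

variable {ω : Config}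

lemma black_of_present {e : BEdge} (hp : contourCfg ω e = true) :
    Even (e.1.1 + e.1.2) := by
  by_contra h
  have : ¬ IsBlackFace e.1 := h
  unfold contourCfg at hp
  simp [this] at hp

lemma same_face_not_both (hω : Constrained ω) {m n : ℤ}
    (h1 : contourCfg ω ((m, n), true) = true) (h2 : contourCfg ω ((m, n), false) = true) :
    False := by
  have hb : IsBlackFace (m, n) := black_of_present h1
  have e1 : ω (m, n) ≠ ω (m, n + 1) := by
    unfold contourCfg at h1; simpa [hb, bne_iff_ne] using h1
  have e2 : ω (m, n) ≠ ω (m + 1, n) := by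
    unfold contourCfg at h2; simpa [hb, bne_iff_ne] using h2
  rcases hω m n hb with ⟨h, _⟩ | ⟨h, _⟩
  · exact e1 h
  · exact e2 h

lemma cross_vert_char {e : BEdge} {p q : ℤ} (h : crossesG e (p, q) (p, q + 1)) :
    e = ((p, q), true) ∨ e = ((p - 1, q), true) := by
  obtain ⟨⟨m, n⟩, t⟩ := e
  obtain ⟨_, hsum⟩ := h
  cases t
  · exfalso
    simp only [Bool.false_eq_true, if_false, Prod.mk.injEq] at hsum
    rcases hsum with ⟨h1, _⟩ | ⟨h1, _⟩ <;> omega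
  · simp only [if_true, Prod.mk.injEq] at hsum
    simp only [Prod.mk.injEq, eq_self_iff_true, and_true]
    rcases hsum with ⟨h1, h2⟩ | ⟨h1, h2⟩ <;> omega

lemma cross_horiz_char {e : BEdge} {p q : ℤ} (h : crossesG e (p, q) (p + 1, q)) :
    e = ((p, q), false) ∨ e = ((p, q - 1), false) := by
  obtain ⟨⟨m, n⟩, t⟩ := e
  obtain ⟨_, hsum⟩ := h
  cases t
  · simp only [Bool.false_eq_true, if_false, Prod.mk.injEq] at hsum
    simp only [Prod.mk.injEq, eq_self_iff_true, and_true]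
    rcases hsum with ⟨h1, h2⟩ | ⟨h1, h2⟩ <;> omega
  · exfalso
    simp only [if_true, Prod.mk.injEq] at hsum
    rcases hsum with ⟨_, h2⟩ | ⟨_, h2⟩ <;> omega

lemma crossesG_symm {e : BEdge} {u w : ℤ × ℤ} (h : crossesG e u w) : crossesG e w u := by
  obtain ⟨hadj, hsum⟩ := h
  refine ⟨by rw [zadj_iff] at *; omega, ?_⟩
  rw [show w.1 + u.1 = u.1 + w.1 by ring, show w.2 + u.2 = u.2 + w.2 by ring]
  exact hsum

lemma shareEnd_symm {e₁ e₂ : BEdge} (h : shareEnd e₁ e₂) : shareEnd e₂ e₁ := by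
  unfold shareEnd at *
  rcases h with h | h | h | h <;> rw [h] <;> tauto

lemma edgeOf_inj_dir {V : ℤ × ℤ} {γ₁ γ₂ : Dir10}
    (h : edgeOf (V, γ₁) = edgeOf (V, γ₂)) : γ₁ = γ₂ := by
  obtain ⟨r, s⟩ := V
  cases γ₁ <;> cases γ₂ <;> simp [edgeOf, Prod.ext_iff] at h ⊢ <;> omega

lemma rev_lot_eq_rot (δ : Dir10) : δ.rev.lot = δ.rot := by cases δ <;> rfl
lemma lot_lot_eq_rev (δ : Dir10) : δ.lot.lot = δ.rev := by cases δ <;> rfl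

/-- three present edges at a white vertex force the fourth present -/
lemma four_present (hω : Constrained ω) {V : ℤ × ℤ} (hw : Odd (V.1 + V.2)) (δ : Dir10)
    (h1 : presb ω (V, δ.rev) = true) (h2 : presb ω (V, δ) = true)
    (h3 : presb ω (V, δ.lot) = true) : presb ω (V, δ.rot) = true := by
  rw [presb_iff hω hw] at h1 h2 h3 ⊢
  rw [rev_lot_eq_rot] at h1
  rw [lot_lot_eq_rev] at h3
  have l5 : δ.rot.lot = δ := by cases δ <;> rfl
  rw [l5]
  revert h1 h2 h3
  generalize ω (tc (V, δ)) = a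
  generalize ω (tc (V, δ.lot)) = b
  generalize ω (tc (V, δ.rev)) = c
  generalize ω (tc (V, δ.rot)) = d
  intro h1 h2 h3
  cases a <;> cases b <;> cases c <;> cases d <;> simp_all

lemma dbl_inj {V₁ V₂ : ℤ × ℤ} (h : dbl V₁ = dbl V₂) : V₁ = V₂ := by
  obtain ⟨a, b⟩ := V₁; obtain ⟨c, d⟩ := V₂
  simp only [dbl, Prod.mk.injEq] at h ⊢
  omega

lemma end_char {e : BEdge} {z : ℤ × ℤ} (hp : contourCfg ω e = true)
    (h : (edgeEnds e).1 = z ∨ (edgeEnds e).2 = z) :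
    ∃ (V : ℤ × ℤ) (α : Dir10), e = edgeOf (V, α) ∧ Odd (V.1 + V.2) ∧ dbl V = z := by
  have hb : Even (e.1.1 + e.1.2) := black_of_present hp
  obtain ⟨⟨m, n⟩, t⟩ := e
  simp only [Prod.fst, Prod.snd] at hb
  obtain ⟨kk, hkk⟩ := hb
  cases t
  · simp only [edgeEnds, Bool.false_eq_true, if_false] at h
    rcases h with h | h
    · exact ⟨(m, n - 1), Dir10.N, by simp [edgeOf, Prod.ext_iff],
        ⟨kk - 1, by simp only; omega⟩, by rw [← h]; simp [dbl, Prod.ext_iff]; omega⟩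
    · exact ⟨(m, n + 1), Dir10.S, by simp [edgeOf, Prod.ext_iff],
        ⟨kk, by simp only; omega⟩, by rw [← h]; simp [dbl, Prod.ext_iff]; omega⟩
  · simp only [edgeEnds, if_true] at h
    rcases h with h | h
    · exact ⟨(m - 1, n), Dir10.E, by simp [edgeOf, Prod.ext_iff],
        ⟨kk - 1, by simp only; omega⟩, by rw [← h]; simp [dbl, Prod.ext_iff]; omega⟩
    · exact ⟨(m + 1, n), Dir10.W, by simp [edgeOf, Prod.ext_iff],
        ⟨kk, by simp only; omega⟩, by rw [← h]; simp [dbl, Prod.ext_iff]; omega⟩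

lemma share_structure {b c : BEdge} (hpb : contourCfg ω b = true)
    (hpc : contourCfg ω c = true) (h : shareEnd b c) :
    ∃ (V : ℤ × ℤ) (α β : Dir10), b = edgeOf (V, α) ∧ c = edgeOf (V, β) ∧
      Odd (V.1 + V.2) := by
  unfold shareEnd at h
  have key : ∀ z : ℤ × ℤ, ((edgeEnds b).1 = z ∨ (edgeEnds b).2 = z) →
      ((edgeEnds c).1 = z ∨ (edgeEnds c).2 = z) →
      ∃ (V : ℤ × ℤ) (α β : Dir10), b = edgeOf (V, α) ∧ c = edgeOf (V, β) ∧
        Odd (V.1 + V.2) := by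
    intro z h1 h2
    obtain ⟨V₁, α, he1, hw1, hd1⟩ := end_char hpb h1
    obtain ⟨V₂, β, he2, hw2, hd2⟩ := end_char hpc h2
    have : V₁ = V₂ := dbl_inj (hd1.trans hd2.symm)
    subst this
    exact ⟨V₁, α, β, he1, he2, hw1⟩
  rcases h with h | h | h | h
  · exact key _ (Or.inl rfl) (Or.inl h.symm)
  · exact key _ (Or.inl rfl) (Or.inr h.symm)
  · exact key _ (Or.inr rfl) (Or.inl h.symm)
  · exact key _ (Or.inr rfl) (Or.inr h.symm)

/-- the crossing function across the corner `G`-edge flanking the edge at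
direction `α` from the white vertex `V`; oriented from `tc (V,α)` to `tc (V,α.lot)`. -/
def chiA (V : ℤ × ℤ) (α : Dir10) (d : Dart10) : ℤ :=
  match α with
  | .E => chiv (V.1 + 1) V.2 d
  | .N => chih V.1 (V.2 + 1) d
  | .W => - chiv V.1 V.2 d
  | .S => - chih V.1 V.2 d

lemma chiA_support (hω : Constrained ω) {V : ℤ × ℤ} (hw : Odd (V.1 + V.2)) (α : Dir10)
    {d : Dart10} (hp : presb ω d = true) (h : chiA V α d ≠ 0) :
    edgeOf d = edgeOf (V, α) := by
  obtain ⟨r, s⟩ := V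
  have hbd : Even ((edgeOf d).1.1 + (edgeOf d).1.2) := black_of_present hp
  simp only [Prod.fst, Prod.snd] at hw
  obtain ⟨t, ht⟩ := hw
  cases α
  · -- E: vertical G-edge (r+1, s)-(r+1, s+1)
    have hcr := chiv_cross (p := r + 1) (q := s) h
    rcases cross_vert_char hcr with hh | hh
    · rw [hh]; simp [edgeOf]
    · exfalso
      rw [hh] at hbd
      simp only [Prod.fst, Prod.snd] at hbd
      obtain ⟨u, hu⟩ := hbd
      omega
  · have hcr := chih_cross (p := r) (q := s + 1) (by simpa [chiA] using h)
    rcases cross_horiz_char hcr with hh | hh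
    · rw [hh]; simp [edgeOf]
    · exfalso
      rw [hh] at hbd
      simp only [Prod.fst, Prod.snd] at hbd
      obtain ⟨u, hu⟩ := hbd
      omega
  · have h' : chiv r s d ≠ 0 := by simpa [chiA] using h
    have hcr := chiv_cross h'
    rcases cross_vert_char hcr with hh | hh
    · exfalso
      rw [hh] at hbd
      simp only [Prod.fst, Prod.snd] at hbd
      obtain ⟨u, hu⟩ := hbd
      omega
    · rw [hh]; simp [edgeOf]
  · have h' : chih r s d ≠ 0 := by simpa [chiA] using h
    have hcr := chih_cross h'
    rcases cross_horiz_char hcr with hh | hh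
    · exfalso
      rw [hh] at hbd
      simp only [Prod.fst, Prod.snd] at hbd
      obtain ⟨u, hu⟩ := hbd
      omega
    · rw [hh]; simp [edgeOf]

lemma chiA_vers1 (V : ℤ × ℤ) (α : Dir10) : chiA V α (V, α) ≠ 0 := by
  obtain ⟨r, s⟩ := V
  cases α <;> simp [chiA, chiv, chih]

lemma chiA_vers2 (V : ℤ × ℤ) (α : Dir10) : chiA V α (dhead (V, α), α.rev) ≠ 0 := by
  obtain ⟨r, s⟩ := V
  cases α <;> simp [chiA, chiv, chih, dhead, vecd, Dir10.rev] <;> omega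

lemma walk_sum_ne_zero {dd : ℕ → Dart10} {k : ℕ} {F : Dart10 → ℤ} {i₀ : ℕ}
    (hi₀ : i₀ < k) (h0 : F (dd i₀) ≠ 0)
    (hsupp : ∀ i < k, F (dd i) ≠ 0 → dd i = dd i₀) :
    ∑ i ∈ Finset.range k, F (dd i) ≠ 0 := by
  have hcongr : ∀ i ∈ Finset.range k, F (dd i) = if dd i = dd i₀ then F (dd i₀) else 0 := by
    intro i hi
    by_cases h : dd i = dd i₀
    · rw [if_pos h, h]
    · rw [if_neg h]
      by_contra hne
      exact h (hsupp i (Finset.mem_range.1 hi) hne)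
  rw [Finset.sum_congr rfl hcongr, Finset.sum_ite, Finset.sum_const, Finset.sum_const_zero,
    add_zero]
  have hmem : i₀ ∈ (Finset.range k).filter (fun i => dd i = dd i₀) := by
    simp [Finset.mem_filter, hi₀]
  have hpos : 0 < ((Finset.range k).filter (fun i => dd i = dd i₀)).card :=
    Finset.card_pos.2 ⟨i₀, hmem⟩
  rw [nsmul_eq_mul]
  exact mul_ne_zero (Int.natCast_ne_zero.2 (by omega)) h0

end Aux10f

section Aux10g

lemma dir_cases (β δ : Dir10) : β = δ ∨ β = δ.rot ∨ β = δ.lot ∨ β = δ.rev := by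
  cases β <;> cases δ <;> simp [Dir10.rot, Dir10.lot, Dir10.rev]

lemma face_bound (d : Dart10) :
    (edgeOf d).1.1.natAbs ≤ d.1.1.natAbs + 1 ∧ (edgeOf d).1.2.natAbs ≤ d.1.2.natAbs + 1 := by
  obtain ⟨⟨r, s⟩, δ⟩ := d
  cases δ <;> constructor <;> simp [edgeOf] <;> omega

end Aux10g
/-- Lemma 2.7 of the paper: every infinite component of `G ∖ C∞`
contains an infinite cluster incident to the infinite contour `C∞`. -/
theorem infinite_component_contains_incident_infinite_cluster
    (ω : Config) (hω : Constrained ω) (C : Set BEdge)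
    (hC : IsContour ω C) (hCi : C.Infinite)
    (v : ℤ × ℤ) (hv : (GminusComp C v).Infinite) :
    ∃ D, IsCluster ω D ∧ D.Infinite ∧ D ⊆ GminusComp C v ∧ ContourIncCluster C D := by
  classical
  obtain ⟨x, x', e₀, hxK, he₀C, hcr⟩ := exists_boundary_vertex hC v
  have hpe₀ : contourCfg ω e₀ = true := contour_present hC he₀C
  have hDsub : cluster ω x ⊆ GminusComp C v := fun w hw => gm_of_sc hω hC hxK hw
  by_cases hDinf : (cluster ω x).Infinite
  · exact ⟨cluster ω x, ⟨x, rfl⟩, hDinf, hDsub,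
      ⟨e₀, he₀C, x, Relation.ReflTransGen.refl, inc_of_cross hcr⟩⟩
  exfalso
  have hDfin : (cluster ω x).Finite := Set.not_infinite.1 hDinf
  obtain ⟨d₀, hd₀e, hd₀w, hd₀p, hd₀sc⟩ := init_dart hω hpe₀ hcr
  -- the boundary walk
  set dd : ℕ → Dart10 := fun i => (fun d => dsucc ω d)^[i] d₀ with hdddef
  have hstep : ∀ i, dd (i + 1) = dsucc ω (dd i) := fun i => by
    simp only [hdddef, Function.iterate_succ_apply']
  have hdd0 : dd 0 = d₀ := rfl
  have hinv : ∀ i, presb ω (dd i) = true ∧ Odd ((dd i).1.1 + (dd i).1.2) ∧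
      SameCluster ω x (tc (dd i)) ∧ edgeOf (dd i) ∈ C := by
    intro i
    induction i with
    | zero => exact ⟨hd₀p, hd₀w, hd₀sc, by rw [hdd0, hd₀e]; exact he₀C⟩
    | succ n ih =>
      obtain ⟨hp, hw, hsc, hc⟩ := ih
      rw [hstep n]
      refine ⟨presb_succ hω hw hp, ?_, sc_trans hsc (tc_succ hω hw hp),
        mem_C_succ hC hc hp (presb_succ hω hw hp)⟩
      rw [dsucc_fst]
      exact white_dhead hw
  -- pigeonhole: the walk repeats
  have hrep : ∃ i j, i < j ∧ dd i = dd j := by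
    have hmapsto : ∀ i, (tc (dd i), (dd i).2) ∈
        hDfin.toFinset ×ˢ (Finset.univ : Finset Dir10) := by
      intro i
      rw [Finset.mem_product]
      exact ⟨by rw [Set.Finite.mem_toFinset]; exact (hinv i).2.2.1, Finset.mem_univ _⟩
    obtain ⟨i, _, j, _, hne, heq⟩ :=
      Finset.exists_ne_map_eq_of_card_lt_of_maps_to
        (s := Finset.range ((hDfin.toFinset ×ˢ (Finset.univ : Finset Dir10)).card + 1))
        (t := hDfin.toFinset ×ˢ (Finset.univ : Finset Dir10))
        (by simp) (fun i _ => hmapsto i)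
    have hdeq : dd i = dd j := by
      have h1 : tc (dd i) = tc (dd j) := by
        have h := congrArg Prod.fst heq; simpa using h
      have h2 : (dd i).2 = (dd j).2 := by
        have h := congrArg Prod.snd heq; simpa using h
      exact tc_dir_inj h1 h2
    rcases lt_or_gt_of_ne hne with h | h
    · exact ⟨i, j, h, hdeq⟩
    · exact ⟨j, i, h, hdeq.symm⟩
  obtain ⟨i, j, hij, hijeq⟩ := hrep
  have hback : ∀ n m : ℕ, dd (n + 1) = dd (m + 1) → dd n = dd m := by
    intro n m h
    have h1 : dpred ω (dd (n + 1)) = dd n := by rw [hstep n]; exact pred_succ ω (dd n) (hinv n).1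
    have h2 : dpred ω (dd (m + 1)) = dd m := by rw [hstep m]; exact pred_succ ω (dd m) (hinv m).1
    rw [← h1, ← h2, h]
  set k := j - i with hkdef
  have hkpos : 0 < k := by omega
  have hclose : dd k = dd 0 := by
    have key : ∀ t : ℕ, t ≤ i → dd (i - t) = dd (j - t) := by
      intro t
      induction t with
      | zero => intro _; simpa using hijeq
      | succ u ih =>
        intro hu
        have h1 := ih (by omega)
        have e1 : i - u = (i - (u + 1)) + 1 := by omega
        have e2 : j - u = (j - (u + 1)) + 1 := by omega
        rw [e1, e2] at h1
        exact hback _ _ h1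
    have h0 := key i le_rfl
    simp only [Nat.sub_self] at h0
    rw [← h0]
  -- bound on the walk
  set M : ℕ := (Finset.range k).sup (fun i => (dd i).1.1.natAbs + (dd i).1.2.natAbs) with hMdef
  have hMb : ∀ i < k, (dd i).1.1.natAbs + (dd i).1.2.natAbs ≤ M := by
    intro i hi
    rw [hMdef]
    exact Finset.le_sup (f := fun i => (dd i).1.1.natAbs + (dd i).1.2.natAbs)
      (Finset.mem_range.2 hi)
  have hfar : ∀ u : ℤ × ℤ, ((M : ℤ) + 3 < (u.1.natAbs : ℤ) ∨ (M : ℤ) + 3 < (u.2.natAbs : ℤ)) →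
      WW dd k u = 0 := by
    intro u hu
    rcases hu with hu | hu
    · apply WW_far_side
      intro i hi
      have h := hMb i hi
      omega
    · rcases le_or_gt u.2 0 with h2 | h2
      · apply WW_far_low
        intro i hi
        have h := hMb i hi
        omega
      · apply WW_far_top dd k hclose hstep
        intro i hi
        have h := hMb i hi
        omega
  -- W respects uncrossed edges
  have hWadj : ∀ a b : ℤ × ℤ, ZAdj a b → (∀ i < k, ¬ crossesG (edgeOf (dd i)) a b) →
      WW dd k a = WW dd k b := by
    intro a b hab hnc
    have hvv : ∀ p q : ℤ, (∀ i < k, ¬ crossesG (edgeOf (dd i)) (p, q) (p, q + 1)) →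
        WW dd k (p, q + 1) = WW dd k (p, q) := by
      intro p q hq
      have h1 := WW_vert_diff dd k p q
      have h2 : ∑ i ∈ Finset.range k, chiv p q (dd i) = 0 := by
        refine Finset.sum_eq_zero fun i hi => ?_
        by_contra hne
        exact hq i (Finset.mem_range.1 hi) (chiv_cross hne)
      omega
    have hhh : ∀ p q : ℤ, (∀ i < k, ¬ crossesG (edgeOf (dd i)) (p, q) (p + 1, q)) →
        WW dd k (p, q) = WW dd k (p + 1, q) := by
      intro p q hq
      have h1 := WW_horiz_diff dd k p q hclose hstep
      have h2 : ∑ i ∈ Finset.range k, chih p q (dd i) = 0 := by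
        refine Finset.sum_eq_zero fun i hi => ?_
        by_contra hne
        exact hq i (Finset.mem_range.1 hi) (chih_cross hne)
      omega
    obtain ⟨a1, a2⟩ := a; obtain ⟨b1, b2⟩ := b
    rw [zadj_iff] at hab
    have hcases : (b1 = a1 ∧ b2 = a2 + 1) ∨ (b1 = a1 ∧ a2 = b2 + 1) ∨
        (b2 = a2 ∧ b1 = a1 + 1) ∨ (b2 = a2 ∧ a1 = b1 + 1) := by
      dsimp only at hab
      omega
    rcases hcases with ⟨h1, h2⟩ | ⟨h1, h2⟩ | ⟨h1, h2⟩ | ⟨h1, h2⟩ <;> rw [h1, h2] at hnc ⊢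
    · exact (hvv a1 a2 hnc).symm
    · exact hvv a1 b2 (fun i hi hc => hnc i hi (crossesG_symm hc))
    · exact hhh a1 a2 hnc
    · exact (hhh b1 a2 (fun i hi hc => hnc i hi (crossesG_symm hc))).symm
  have hWK : ∀ w ∈ GminusComp C v, WW dd k w = WW dd k v := by
    intro w hw
    induction hw with
    | refl => rfl
    | tail hst hone ih =>
      rw [← ih]
      exact (hWadj _ _ hone.1
        (fun i hi hc => hone.2 ⟨edgeOf (dd i), (hinv i).2.2.2, hc⟩)).symm
  have hvzero : WW dd k v = 0 := by
    obtain ⟨w, hwK, hwfar⟩ : ∃ w ∈ GminusComp C v,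
        ((M : ℤ) + 3 < (w.1.natAbs : ℤ) ∨ (M : ℤ) + 3 < (w.2.natAbs : ℤ)) := by
      by_contra hcon
      push_neg at hcon
      apply hv
      refine Set.Finite.subset
        (Set.finite_Icc ((-(M : ℤ) - 3, -(M : ℤ) - 3) : ℤ × ℤ) ((M : ℤ) + 3, (M : ℤ) + 3)) ?_
      intro w hw
      obtain ⟨hc1, hc2⟩ := hcon w hw
      refine Set.mem_Icc.2 ⟨Prod.le_def.2 ⟨?_, ?_⟩, Prod.le_def.2 ⟨?_, ?_⟩⟩
      · show -(M : ℤ) - 3 ≤ w.1; omega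
      · show -(M : ℤ) - 3 ≤ w.2; omega
      · show w.1 ≤ (M : ℤ) + 3; omega
      · show w.2 ≤ (M : ℤ) + 3; omega
    rw [← hWK w hwK]
    exact hfar w hwfar
  have hKzero : ∀ w ∈ GminusComp C v, WW dd k w = 0 := fun w hw => by
    rw [hWK w hw]; exact hvzero
  have hDzero : ∀ w, SameCluster ω x w → WW dd k w = 0 := fun w hw =>
    hKzero w (hDsub hw)
  -- the edge set of the closed walk
  set Eg : BEdge → Prop := fun e => ∃ i, i < k ∧ edgeOf (dd i) = e with hEgdef
  have hEg_all : ∀ i ≤ k, Eg (edgeOf (dd i)) := by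
    intro i hi
    rcases lt_or_eq_of_le hi with h | h
    · exact ⟨i, h, rfl⟩
    · subst h
      exact ⟨0, hkpos, (congrArg edgeOf hclose).symm⟩
  -- difference of W across a corner edge
  have hdiffA : ∀ (V : ℤ × ℤ) (α : Dir10),
      WW dd k (tc (V, α.lot)) - WW dd k (tc (V, α)) =
        ∑ i ∈ Finset.range k, chiA V α (dd i) := by
    intro V α
    obtain ⟨r, s⟩ := V
    cases α
    · have h := WW_vert_diff dd k (r + 1) s
      have hs : ∑ i ∈ Finset.range k, chiA (r, s) Dir10.E (dd i) =
          ∑ i ∈ Finset.range k, chiv (r + 1) s (dd i) :=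
        Finset.sum_congr rfl fun i _ => rfl
      simp only [tc, Dir10.lot]
      rw [hs]
      convert h using 2
    · have h := WW_horiz_diff dd k r (s + 1) hclose hstep
      have hs : ∑ i ∈ Finset.range k, chiA (r, s) Dir10.N (dd i) =
          ∑ i ∈ Finset.range k, chih r (s + 1) (dd i) :=
        Finset.sum_congr rfl fun i _ => rfl
      simp only [tc, Dir10.lot]
      rw [hs]
      convert h using 2
    · have h := WW_vert_diff dd k r s
      have hs : ∑ i ∈ Finset.range k, chiA (r, s) Dir10.W (dd i) =
          - ∑ i ∈ Finset.range k, chiv r s (dd i) := by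
        rw [← Finset.sum_neg_distrib]
        exact Finset.sum_congr rfl fun i _ => rfl
      simp only [tc, Dir10.lot]
      rw [hs]
      omega
    · have h := WW_horiz_diff dd k r s hclose hstep
      have hs : ∑ i ∈ Finset.range k, chiA (r, s) Dir10.S (dd i) =
          - ∑ i ∈ Finset.range k, chih r s (dd i) := by
        rw [← Finset.sum_neg_distrib]
        exact Finset.sum_congr rfl fun i _ => rfl
      simp only [tc, Dir10.lot]
      rw [hs]
      omega
  have hsupport : ∀ (V : ℤ × ℤ), Odd (V.1 + V.2) → ∀ (α : Dir10), ∀ i < k,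
      chiA V α (dd i) ≠ 0 → edgeOf (dd i) = edgeOf (V, α) := by
    intro V hwV α i hi hne
    exact chiA_support hω hwV α (hinv i).1 hne
  have hjump : ∀ (V : ℤ × ℤ), Odd (V.1 + V.2) → ∀ α : Dir10,
      Eg (edgeOf (V, α)) → WW dd k (tc (V, α.lot)) ≠ WW dd k (tc (V, α)) := by
    intro V hwV α hEgα
    obtain ⟨i₀, hi₀, hie⟩ := hEgα
    have hdiff := hdiffA V α
    have hsum_ne : ∑ i ∈ Finset.range k, chiA V α (dd i) ≠ 0 := by
      refine walk_sum_ne_zero hi₀ ?_ ?_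
      · rcases edge_reps (d := (V, α)) hie with h | h <;> rw [h]
        · exact chiA_vers1 V α
        · exact chiA_vers2 V α
      · intro i hi hne
        have he := hsupport V hwV α i hi hne
        have hss : ω (tc (dd i)) = ω (tc (dd i₀)) :=
          (sc_omega (hinv i).2.2.1).symm.trans (sc_omega (hinv i₀).2.2.1)
        exact dart_unique hω (hinv i₀).2.1 (hinv i).2.1 (hinv i₀).1
          (he.trans hie.symm) hss
    intro hcon
    rw [hcon] at hdiff
    simp only [sub_self] at hdiff
    exact hsum_ne hdiff.symm
  have hcorner : ∀ (V : ℤ × ℤ), Odd (V.1 + V.2) → ∀ α : Dir10,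
      ¬ Eg (edgeOf (V, α)) → WW dd k (tc (V, α.lot)) = WW dd k (tc (V, α)) := by
    intro V hwV α hno
    have hdiff := hdiffA V α
    have hzero : ∑ i ∈ Finset.range k, chiA V α (dd i) = 0 := by
      refine Finset.sum_eq_zero fun i hi => ?_
      by_contra hne
      exact hno ⟨i, Finset.mem_range.1 hi, hsupport V hwV α i (Finset.mem_range.1 hi) hne⟩
    omega
  -- face lemma
  have hfaceV : ∀ (V : ℤ × ℤ), Odd (V.1 + V.2) → ∀ γd : Dir10,
      presb ω (V, γd) = true → ¬ Eg (edgeOf (V, γd)) →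
      WW dd k (tc (V, γd)) = WW dd k ((edgeOf (V, γd)).1) := by
    intro V hwV γd hpres hno
    obtain ⟨r, s⟩ := V
    obtain ⟨t, ht⟩ := hwV
    dsimp only at ht
    cases γd
    · rfl
    · have h := hcorner (r, s) ⟨t, by simpa using ht⟩ Dir10.N hno
      have h' : WW dd k (r, s + 1) = WW dd k (r + 1, s + 1) := h
      exact (show WW dd k (r + 1, s + 1) = WW dd k (r, s + 1) from h'.symm)
    · have h := hcorner (r, s) ⟨t, by simpa using ht⟩ Dir10.W hno
      have h' : WW dd k (r, s) = WW dd k (r, s + 1) := h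
      have h2 : WW dd k (r - 1, s) = WW dd k (r, s) := by
        refine hWadj (r - 1, s) (r, s)
          (by rw [zadj_iff]; show (r - 1 - r).natAbs + (s - s).natAbs = 1; omega) ?_
        intro i hi hcross
        have hcross' : crossesG (edgeOf (dd i)) (r - 1, s) (r - 1 + 1, s) := by
          rw [show (r - 1 + 1 : ℤ) = r by ring]; exact hcross
        have hchar := cross_horiz_char hcross'
        rcases hchar with hh | hh
        · refine same_face_not_both hω (m := r - 1) (n := s) ?_ ?_
          · have hp' := hpres
            unfold presb edgeOf at hp'
            exact hp'
          · have hq := (hinv i).1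
            unfold presb at hq
            rwa [hh] at hq
        · have hblack := black_of_present (e := ((r - 1, s - 1), false))
            (by have hq := (hinv i).1; unfold presb at hq; rwa [hh] at hq)
          dsimp only at hblack
          obtain ⟨u, hu⟩ := hblack
          omega
      show WW dd k (r, s + 1) = WW dd k (r - 1, s)
      rw [← h', h2]
    · have h2 : WW dd k (r, s - 1) = WW dd k (r, s) := by
        refine hWadj (r, s - 1) (r, s)
          (by rw [zadj_iff]; show (r - r).natAbs + (s - 1 - s).natAbs = 1; omega) ?_
        intro i hi hcross
        have hcross' : crossesG (edgeOf (dd i)) (r, s - 1) (r, s - 1 + 1) := by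
          rw [show (s - 1 + 1 : ℤ) = s by ring]; exact hcross
        have hchar := cross_vert_char hcross'
        rcases hchar with hh | hh
        · refine same_face_not_both hω (m := r) (n := s - 1) ?_ ?_
          · have hq := (hinv i).1
            unfold presb at hq
            rwa [hh] at hq
          · have hp' := hpres
            unfold presb edgeOf at hp'
            exact hp'
        · have hblack := black_of_present (e := ((r - 1, s - 1), true))
            (by have hq := (hinv i).1; unfold presb at hq; rwa [hh] at hq)
          dsimp only at hblack
          obtain ⟨u, hu⟩ := hblack
          omega
      show WW dd k (r, s) = WW dd k (r, s - 1)
      exact h2.symm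
  -- main chain induction along the contour
  have hPmain : ∀ g ∈ C, Eg g ∨ (contourCfg ω g = true ∧ WW dd k (g.1) ≠ 0) := by
    intro g hgC
    obtain ⟨eb, hpeb, hCeq⟩ := hC
    have hchain : Relation.ReflTransGen
        (fun a b => contourCfg ω a = true ∧ contourCfg ω b = true ∧ shareEnd a b)
        (edgeOf (dd 0)) g := by
      have h1 : Relation.ReflTransGen
          (fun a b => contourCfg ω a = true ∧ contourCfg ω b = true ∧ shareEnd a b)
          eb (edgeOf (dd 0)) := by
        have hm := (hinv 0).2.2.2
        rwa [hCeq] at hm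
      have h2 : Relation.ReflTransGen
          (fun a b => contourCfg ω a = true ∧ contourCfg ω b = true ∧ shareEnd a b)
          eb g := by rwa [hCeq] at hgC
      have hsymm : Symmetric (Relation.ReflTransGen
          (fun a b : BEdge => contourCfg ω a = true ∧ contourCfg ω b = true ∧ shareEnd a b)) :=
        fun x y h => (@Relation.ReflTransGen.symmetric _
          (fun a b : BEdge => contourCfg ω a = true ∧ contourCfg ω b = true ∧ shareEnd a b)
          ⟨fun a b ⟨ha, hb, hs⟩ => ⟨hb, ha, shareEnd_symm hs⟩⟩).symm x y h
      exact Relation.ReflTransGen.trans (hsymm h1) h2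
    clear hgC
    induction hchain with
    | refl => exact Or.inl ⟨0, hkpos, rfl⟩
    | @tail b c hab hbc ih =>
      obtain ⟨hpb, hpc, hshare⟩ := hbc
      by_cases hcEg : Eg c
      · exact Or.inl hcEg
      right
      refine ⟨hpc, ?_⟩
      by_cases hbceq : b = c
      · rcases ih with hbEg | ⟨_, hW⟩
        · exact absurd (hbceq ▸ hbEg) hcEg
        · exact hbceq ▸ hW
      obtain ⟨V, α, β, hbeq, hceq, hwV⟩ := share_structure hpb hpc hshare
      have hαβ : α ≠ β := fun h => hbceq (by rw [hbeq, hceq, h])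
      by_cases hAt : ∃ γd : Dir10, Eg (edgeOf (V, γd))
      · -- there is a visit of the walk at V
        obtain ⟨γ₀, i₀', hi₀', hie⟩ := hAt
        obtain ⟨j₂, hj₂lt, hj₂head⟩ : ∃ j₂, j₂ < k ∧ dhead (dd j₂) = V := by
          rcases edge_reps (d := (V, γ₀)) hie with h | h
          · rcases Nat.eq_zero_or_pos i₀' with h0 | h0
            · refine ⟨k - 1, by omega, ?_⟩
              have hh : dhead (dd (k - 1)) = (dd ((k - 1) + 1)).1 := by
                rw [hstep]; exact (dsucc_fst _ _).symm
              rw [hh, show (k - 1) + 1 = k by omega, hclose, ← h0, h]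
            · refine ⟨i₀' - 1, by omega, ?_⟩
              have hh : dhead (dd (i₀' - 1)) = (dd ((i₀' - 1) + 1)).1 := by
                rw [hstep]; exact (dsucc_fst _ _).symm
              rw [hh, show (i₀' - 1) + 1 = i₀' by omega, h]
          · exact ⟨i₀', hi₀', by rw [h]; exact dhead_rev (V, γ₀)⟩
        set δa := (dd j₂).2 with hδa
        have hpa : presb ω (dd j₂) = true := (hinv j₂).1
        have hprev : presb ω (V, δa.rev) = true := by
          rw [← hj₂head]; exact presb_rev hpa
        have hArrEdge : edgeOf (V, δa.rev) = edgeOf (dd j₂) := by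
          rw [← hj₂head]
          exact edge_rev_head (dd j₂)
        have hArrEg : Eg (edgeOf (V, δa.rev)) := by
          rw [hArrEdge]; exact ⟨j₂, hj₂lt, rfl⟩
        have hβne1 : β ≠ δa.rev := fun h => hcEg (by rw [hceq, h]; exact hArrEg)
        have hpcβ : presb ω (V, β) = true := by
          unfold presb; rw [← hceq]; exact hpc
        have hrot : presb ω (V, δa.rot) = true := by
          by_contra hrotf0
          have hrotf : presb ω (V, δa.rot) = false := by simpa using hrotf0
          by_cases hstr : presb ω (V, δa) = true
          · have hEgstr : Eg (edgeOf (V, δa)) := by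
              have h1 : dsucc ω (dd j₂) = ((V, δa) : Dart10) := by
                unfold dsucc
                rw [hj₂head, if_neg (by rw [hrotf]; simp), if_pos hstr]
              have hmem := hEg_all (j₂ + 1) (by omega)
              rw [hstep j₂, h1] at hmem
              exact hmem
            have hβδa : β ≠ δa := fun h => hcEg (by rw [hceq, h]; exact hEgstr)
            have hβlot : β = δa.lot := by
              rcases dir_cases β δa with h | h | h | h
              · exact absurd h hβδa
              · exfalso; rw [h, hrotf] at hpcβ; simp at hpcβ
              · exact h
              · exact absurd h hβne1
            exact hrotf0 (four_present hω hwV δa hprev hstr (by rw [← hβlot]; exact hpcβ))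
          · have hstrf : presb ω (V, δa) = false := by simpa using hstr
            have hEglot : Eg (edgeOf (V, δa.lot)) := by
              have h1 : dsucc ω (dd j₂) = ((V, δa.lot) : Dart10) := by
                unfold dsucc
                rw [hj₂head, if_neg (by rw [hrotf]; simp), if_neg (by rw [hstrf]; simp)]
              have hmem := hEg_all (j₂ + 1) (by omega)
              rw [hstep j₂, h1] at hmem
              exact hmem
            rcases dir_cases β δa with h | h | h | h
            · rw [h, hstrf] at hpcβ; simp at hpcβ
            · rw [h, hrotf] at hpcβ; simp at hpcβ
            · exact hcEg (by rw [hceq, h]; exact hEglot)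
            · exact hβne1 h
        have hsucceq : dd (j₂ + 1) = ((V, δa.rot) : Dart10) := by
          rw [hstep j₂]
          unfold dsucc
          rw [hj₂head, if_pos hrot]
        have hc₀0 : WW dd k (tc (V, δa.rot)) = 0 := by
          refine hDzero _ ?_
          have hh := (hinv (j₂ + 1)).2.2.1
          rwa [hsucceq] at hh
        have hexitEg : Eg (edgeOf (V, δa.rot)) := by
          have hmem := hEg_all (j₂ + 1) (by omega)
          rwa [hsucceq] at hmem
        have hβne2 : β ≠ δa.rot := fun h => hcEg (by rw [hceq, h]; exact hexitEg)
        have hf := hfaceV V hwV β hpcβ (by rw [← hceq]; exact hcEg)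
        rw [hceq, ← hf]
        rcases dir_cases β δa with hβ | hβ | hβ | hβ
        · -- β = δa
          have hj := hjump V hwV δa.rot hexitEg
          rw [Dir10.lot_rot, hc₀0] at hj
          rw [hβ]
          exact hj
        · exact absurd hβ hβne2
        · -- β = δa.lot
          have hj := hjump V hwV δa.rev hArrEg
          rw [rev_lot_eq_rot, hc₀0] at hj
          have hcr := hcorner V hwV β (by rw [← hceq]; exact hcEg)
          have hβl : β.lot = δa.rev := by rw [hβ, lot_lot_eq_rev]
          rw [hβl] at hcr
          rw [← hcr]
          exact hj.symm
        · exact absurd hβ hβne1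
      · -- clean vertex
        push_neg at hAt
        have hc4E := hcorner V hwV Dir10.E (hAt Dir10.E)
        have hc4N := hcorner V hwV Dir10.N (hAt Dir10.N)
        have hc4W := hcorner V hwV Dir10.W (hAt Dir10.W)
        have hc4S := hcorner V hwV Dir10.S (hAt Dir10.S)
        simp only [Dir10.lot] at hc4E hc4N hc4W hc4S
        have hcc : WW dd k (tc (V, β)) = WW dd k (tc (V, α)) := by
          cases α <;> cases β <;> omega
        rcases ih with hbEg | ⟨_, hWb⟩
        · rw [hbeq] at hbEg
          exact absurd hbEg (hAt α)
        · have hf_b := hfaceV V hwV α (by unfold presb; rw [← hbeq]; exact hpb)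
            (hAt α)
          have hf_c := hfaceV V hwV β (by unfold presb; rw [← hceq]; exact hpc)
            (by rw [← hceq]; exact hcEg)
          rw [hceq, ← hf_c, hcc, hf_b]
          rw [hbeq] at hWb
          exact hWb
  -- conclusion: a far edge of the contour
  obtain ⟨g, hgC, hgfar⟩ : ∃ g ∈ C,
      ((M : ℤ) + 5 < (g.1.1.natAbs : ℤ) ∨ (M : ℤ) + 5 < (g.1.2.natAbs : ℤ)) := by
    by_contra hcon
    push_neg at hcon
    apply hCi
    refine Set.Finite.subset
      (Set.Finite.prod
        (Set.finite_Icc ((-(M : ℤ) - 5, -(M : ℤ) - 5) : ℤ × ℤ) ((M : ℤ) + 5, (M : ℤ) + 5))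
        (Set.finite_univ (α := Bool))) ?_
    intro g hg
    obtain ⟨hc1, hc2⟩ := hcon g hg
    refine Set.mem_prod.2 ⟨Set.mem_Icc.2 ⟨Prod.le_def.2 ⟨?_, ?_⟩, Prod.le_def.2 ⟨?_, ?_⟩⟩,
      Set.mem_univ _⟩
    · show -(M : ℤ) - 5 ≤ g.1.1; omega
    · show -(M : ℤ) - 5 ≤ g.1.2; omega
    · show g.1.1 ≤ (M : ℤ) + 5; omega
    · show g.1.2 ≤ (M : ℤ) + 5; omega
  rcases hPmain g hgC with ⟨i2, hi2, hie2⟩ | ⟨_, hWg⟩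
  · have hb := hMb i2 hi2
    have hfb := face_bound (dd i2)
    rw [hie2] at hfb
    omega
  · refine hWg (hfar g.1 ?_)
    omega

end CP

end
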